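/- arXiv:1903.08599 — 9 statements merged into one kernel-verified Lean document; each statement's English description precedes it below -/
import Mathlib

section
/- Let X ∈ ℝ^{n×m}, D ∈ ℝ^{n×r}, F ∈ ℝ^{r×q}, E ∈ ℝ^{q×m}, let P ∈ S^n be positive definite, and let ε > 0. Suppose FᵀF ≤ 1 (the q×q identity minus FᵀF is positive semidefinite) and P − εDDᵀ is positive definite. Then (X + DFE)ᵀ P⁻¹ (X + DFE) ≤ ε⁻¹EᵀE + Xᵀ(P − εDDᵀ)⁻¹X, i.e., ε⁻¹EᵀE + Xᵀ(P − εDDᵀ)⁻¹X − (X + DFE)ᵀ P⁻¹ (X + DFE) is positive semidefinite. -/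
open Matrix

lemma psd_smul_aux {k : Type*} [Fintype k] {M : Matrix k k ℝ} (h : M.PosSemidef)
    {c : ℝ} (hc : 0 ≤ c) : (c • M).PosSemidef := by
  rw [posSemidef_iff_dotProduct_mulVec]
  refine ⟨?_, fun x => ?_⟩
  · unfold Matrix.IsHermitian
    rw [conjTranspose_smul]
    simp [(conjTranspose_eq_transpose_of_trivial M) ▸ h.1.eq]
  · simp only [smul_mulVec, dotProduct_smul, smul_eq_mul]
    exact mul_nonneg hc ((posSemidef_iff_dotProduct_mulVec.mp h).2 x)

lemma pd_smul_aux {k : Type*} [Fintype k] {M : Matrix k k ℝ} (h : M.PosDef)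
    {c : ℝ} (hc : 0 < c) : (c • M).PosDef := by
  rw [posDef_iff_dotProduct_mulVec]
  refine ⟨?_, fun x hx => ?_⟩
  · unfold Matrix.IsHermitian
    rw [conjTranspose_smul]
    simp [(conjTranspose_eq_transpose_of_trivial M) ▸ h.1.eq]
  · simp only [smul_mulVec, dotProduct_smul, smul_eq_mul]
    exact mul_pos hc ((posDef_iff_dotProduct_mulVec.mp h).2 hx)

/-- For `X ∈ ℝ^{n×m}`, `D ∈ ℝ^{n×r}`, `F ∈ ℝ^{r×q}` with `FᵀF ≤ 1`, `E ∈ ℝ^{q×m}`,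
symmetric positive definite `P ∈ ℝ^{n×n}` and `ε > 0` with `P − εDDᵀ > 0`:
`(X + DFE)ᵀ P⁻¹ (X + DFE) ≤ ε⁻¹EᵀE + Xᵀ(P − εDDᵀ)⁻¹X`. -/
theorem uncertain_quadratic_bound_inv (n m r q : ℕ)
    (X : Matrix (Fin n) (Fin m) ℝ) (D : Matrix (Fin n) (Fin r) ℝ)
    (F : Matrix (Fin r) (Fin q) ℝ) (E : Matrix (Fin q) (Fin m) ℝ)
    (P : Matrix (Fin n) (Fin n) ℝ) (ε : ℝ) (hε : 0 < ε)
    (hP : P.PosDef)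
    (hF : ((1 : Matrix (Fin q) (Fin q) ℝ) - Fᵀ * F).PosSemidef)
    (hPD : (P - ε • (D * Dᵀ)).PosDef) :
    (ε⁻¹ • (Eᵀ * E) + Xᵀ * (P - ε • (D * Dᵀ))⁻¹ * X
      - (X + D * F * E)ᵀ * P⁻¹ * (X + D * F * E)).PosSemidef := by
  have hεinv : (0:ℝ) < ε⁻¹ := inv_pos.mpr hε
  set Q := P - ε • (D * Dᵀ) with hQdef
  -- basic symmetry / invertibility facts
  have hPsymm : Pᵀ = P := (conjTranspose_eq_transpose_of_trivial P) ▸ hP.1.eq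
  have hQsymm : Qᵀ = Q := (conjTranspose_eq_transpose_of_trivial Q) ▸ hPD.1.eq
  have hPiT : (P⁻¹)ᵀ = P⁻¹ := by rw [transpose_nonsing_inv, hPsymm]
  have hQiT : (Q⁻¹)ᵀ = Q⁻¹ := by rw [transpose_nonsing_inv, hQsymm]
  have hPdet : IsUnit P.det := isUnit_iff_ne_zero.mpr hP.det_pos.ne'
  have hQdet : IsUnit Q.det := isUnit_iff_ne_zero.mpr hPD.det_pos.ne'
  have hPPi : P * P⁻¹ = 1 := Matrix.mul_nonsing_inv P hPdet
  have hPiP : P⁻¹ * P = 1 := Matrix.nonsing_inv_mul P hPdet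
  have hQQi : Q * Q⁻¹ = 1 := Matrix.mul_nonsing_inv Q hQdet
  have hPPc : ∀ (C : Matrix (Fin n) (Fin n) ℝ), P * (P⁻¹ * C) = C := fun C => by
    rw [← Matrix.mul_assoc, hPPi, Matrix.one_mul]
  -- the Schur-type matrices
  set S : Matrix (Fin r) (Fin r) ℝ := ε⁻¹ • 1 - Dᵀ * P⁻¹ * D with hSdef
  set T : Matrix (Fin r) (Fin r) ℝ := ε • 1 + (ε * ε) • (Dᵀ * Q⁻¹ * D) with hTdef
  have hSsymm : Sᵀ = S := by
    rw [hSdef]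
    simp [transpose_sub, transpose_smul, transpose_one, transpose_mul, transpose_transpose,
      hPiT, Matrix.mul_assoc]
  have hTsymm : Tᵀ = T := by
    rw [hTdef]
    simp [transpose_add, transpose_smul, transpose_one, transpose_mul, transpose_transpose,
      hQiT, Matrix.mul_assoc]
  have hDPDc1 : ∀ (C : Matrix (Fin r) (Fin n) ℝ),
      Dᵀ * (P⁻¹ * (D * C)) = ε⁻¹ • C - S * C := fun C => by
    rw [hSdef]
    simp [Matrix.sub_mul, Matrix.smul_mul, Matrix.one_mul, Matrix.mul_assoc, sub_sub_cancel]
  have hDPDc2 : ∀ (C : Matrix (Fin r) (Fin m) ℝ),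
      Dᵀ * (P⁻¹ * (D * C)) = ε⁻¹ • C - S * C := fun C => by
    rw [hSdef]
    simp [Matrix.sub_mul, Matrix.smul_mul, Matrix.one_mul, Matrix.mul_assoc, sub_sub_cancel]
  -- Q⁻¹ in terms of P⁻¹
  have hQP : Q⁻¹ = P⁻¹ + ε • (P⁻¹ * (D * (Dᵀ * Q⁻¹))) := by
    have hPQ : P = Q + ε • (D * Dᵀ) := by rw [hQdef]; abel
    have h1 : P * Q⁻¹ = 1 + ε • (D * (Dᵀ * Q⁻¹)) := by
      rw [hPQ, Matrix.add_mul, hQQi, Matrix.smul_mul, Matrix.mul_assoc]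
    calc Q⁻¹ = P⁻¹ * (P * Q⁻¹) := by rw [← Matrix.mul_assoc, hPiP, Matrix.one_mul]
    _ = P⁻¹ * (1 + ε • (D * (Dᵀ * Q⁻¹))) := by rw [h1]
    _ = P⁻¹ + ε • (P⁻¹ * (D * (Dᵀ * Q⁻¹))) := by
        rw [Matrix.mul_add, Matrix.mul_one, mul_smul_comm]
  -- S * T = 1
  have hA : Dᵀ * (Q⁻¹ * D) = Dᵀ * (P⁻¹ * D)
      + ε • (Dᵀ * (P⁻¹ * (D * (Dᵀ * (Q⁻¹ * D))))) := by
    conv_lhs => rw [hQP]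
    simp [Matrix.add_mul, Matrix.mul_add, Matrix.smul_mul, Matrix.mul_smul, Matrix.mul_assoc]
  have hST : S * T = 1 := by
    rw [hSdef, hTdef]
    simp only [Matrix.sub_mul, Matrix.mul_add, Matrix.add_mul, Matrix.smul_mul, Matrix.mul_smul,
      smul_smul, Matrix.one_mul, Matrix.mul_one, Matrix.mul_assoc,
      inv_mul_cancel_left₀ hε.ne', inv_mul_cancel₀ hε.ne', one_smul]
    linear_combination (norm := skip) ε • hA
    match_scalars <;> field_simp <;> ring
  have hTS : T * S = 1 := by
    have h := congrArg Matrix.transpose hST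
    rwa [transpose_mul, hSsymm, hTsymm, transpose_one] at h
  -- S is positive definite
  have hTpd : T.PosDef := by
    rw [hTdef]
    refine Matrix.PosDef.add_posSemidef (pd_smul_aux Matrix.PosDef.one hε) ?_
    refine psd_smul_aux ?_ (by positivity)
    simpa [conjTranspose_eq_transpose_of_trivial] using
      hPD.inv.posSemidef.conjTranspose_mul_mul_same D
  have hSpd : S.PosDef := by
    have hTinv : T⁻¹ = S := Matrix.inv_eq_right_inv hTS
    exact hTinv ▸ hTpd.inv
  have hSinv : S⁻¹ = T := Matrix.inv_eq_right_inv hST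
  have hSSi : S * S⁻¹ = 1 := by rw [hSinv]; exact hST
  have hSiS : S⁻¹ * S = 1 := by rw [hSinv]; exact hTS
  have hsT : (S⁻¹)ᵀ = S⁻¹ := by rw [transpose_nonsing_inv, hSsymm]
  have hSsc1 : ∀ (C : Matrix (Fin r) (Fin n) ℝ), S * (S⁻¹ * C) = C := fun C => by
    rw [← Matrix.mul_assoc, hSSi, Matrix.one_mul]
  have hSsc2 : ∀ (C : Matrix (Fin r) (Fin m) ℝ), S * (S⁻¹ * C) = C := fun C => by
    rw [← Matrix.mul_assoc, hSSi, Matrix.one_mul]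
  have hsSc2 : ∀ (C : Matrix (Fin r) (Fin m) ℝ), S⁻¹ * (S * C) = C := fun C => by
    rw [← Matrix.mul_assoc, hSiS, Matrix.one_mul]
  -- Woodbury identity
  have hQR : Q * (P⁻¹ + P⁻¹ * (D * (S⁻¹ * (Dᵀ * P⁻¹)))) = 1 := by
    rw [hQdef]
    simp only [Matrix.sub_mul, Matrix.mul_add, Matrix.add_mul, Matrix.smul_mul, Matrix.mul_smul,
      Matrix.mul_assoc, hPPi, hPPc, hDPDc1, hSsc1, smul_sub, smul_smul,
      mul_inv_cancel₀ hε.ne', one_smul, Matrix.mul_sub]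
    module
  have hW : Q⁻¹ = P⁻¹ + P⁻¹ * (D * (S⁻¹ * (Dᵀ * P⁻¹))) := Matrix.inv_eq_right_inv hQR
  -- the key algebraic decomposition
  have key : ε⁻¹ • (Eᵀ * E) + Xᵀ * (P⁻¹ + P⁻¹ * (D * (S⁻¹ * (Dᵀ * P⁻¹)))) * X
      - (X + D * F * E)ᵀ * P⁻¹ * (X + D * F * E)
      = ε⁻¹ • (Eᵀ * ((1 - Fᵀ * F) * E))
        + (S⁻¹ * (Dᵀ * (P⁻¹ * X)) - F * E)ᵀ * S * (S⁻¹ * (Dᵀ * (P⁻¹ * X)) - F * E) := by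
    simp only [Matrix.transpose_add, Matrix.transpose_sub, Matrix.transpose_mul,
      Matrix.transpose_transpose, hPiT, hsT, hSsymm, Matrix.mul_add, Matrix.add_mul,
      Matrix.sub_mul, Matrix.mul_sub, Matrix.smul_mul, Matrix.mul_smul, smul_sub, smul_add,
      Matrix.mul_assoc, Matrix.mul_one, Matrix.one_mul, hDPDc2, hSsc2, hsSc2]
    module
  have hpsd1 : (ε⁻¹ • (Eᵀ * ((1 - Fᵀ * F) * E))).PosSemidef := by
    refine psd_smul_aux ?_ hεinv.le
    simpa [conjTranspose_eq_transpose_of_trivial, Matrix.mul_assoc] using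
      hF.conjTranspose_mul_mul_same E
  have hpsd2 : ((S⁻¹ * (Dᵀ * (P⁻¹ * X)) - F * E)ᵀ * S
      * (S⁻¹ * (Dᵀ * (P⁻¹ * X)) - F * E)).PosSemidef := by
    simpa [conjTranspose_eq_transpose_of_trivial] using
      hSpd.posSemidef.conjTranspose_mul_mul_same (S⁻¹ * (Dᵀ * (P⁻¹ * X)) - F * E)
  rw [hW, key]
  exact hpsd1.add hpsd2
end

section
/- Let X ∈ ℝ^{n×m}, D ∈ ℝ^{n×r}, F ∈ ℝ^{r×q}, E ∈ ℝ^{q×m}, let P ∈ S^n be positive definite, and let ε > 0. Suppose FᵀF ≤ 1 (the q×q identity minus FᵀF is positive semidefinite) and ε·1 − DᵀPD is positive definite (1 the r×r identity). Then (X + DFE)ᵀ P (X + DFE) ≤ εEᵀE + XᵀPD(ε·1 − DᵀPD)⁻¹DᵀPX + XᵀPX, i.e., εEᵀE + XᵀPD(ε·1 − DᵀPD)⁻¹DᵀPX + XᵀPX − (X + DFE)ᵀ P (X + DFE) is positive semidefinite. -/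
open Matrix

lemma smul_posSemidef {k : ℕ} {A : Matrix (Fin k) (Fin k) ℝ} (hA : A.PosSemidef)
    {c : ℝ} (hc : 0 ≤ c) : (c • A).PosSemidef := by
  constructor
  · have := hA.1
    simp only [Matrix.IsHermitian, conjTranspose_smul, star_trivial] at *
    rw [this]
  · intro x
    exact (hA.smul hc).2 x

/-- For `X ∈ ℝ^{n×m}`, `D ∈ ℝ^{n×r}`, `F ∈ ℝ^{r×q}` with `FᵀF ≤ 1`, `E ∈ ℝ^{q×m}`,
symmetric positive definite `P ∈ ℝ^{n×n}` and `ε > 0` with `ε·1 − DᵀPD > 0`: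
`(X + DFE)ᵀ P (X + DFE) ≤ εEᵀE + XᵀPD(ε·1 − DᵀPD)⁻¹DᵀPX + XᵀPX`. -/
theorem uncertain_quadratic_bound (n m r q : ℕ)
    (X : Matrix (Fin n) (Fin m) ℝ) (D : Matrix (Fin n) (Fin r) ℝ)
    (F : Matrix (Fin r) (Fin q) ℝ) (E : Matrix (Fin q) (Fin m) ℝ)
    (P : Matrix (Fin n) (Fin n) ℝ) (ε : ℝ) (hε : 0 < ε)
    (hP : P.PosDef)
    (hF : ((1 : Matrix (Fin q) (Fin q) ℝ) - Fᵀ * F).PosSemidef)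
    (hPD : (ε • (1 : Matrix (Fin r) (Fin r) ℝ) - Dᵀ * P * D).PosDef) :
    (ε • (Eᵀ * E)
      + Xᵀ * P * D * (ε • (1 : Matrix (Fin r) (Fin r) ℝ) - Dᵀ * P * D)⁻¹ * Dᵀ * P * X
      + Xᵀ * P * X
      - (X + D * F * E)ᵀ * P * (X + D * F * E)).PosSemidef := by
  set S : Matrix (Fin r) (Fin r) ℝ := ε • (1 : Matrix (Fin r) (Fin r) ℝ) - Dᵀ * P * D with hSdef
  set T : Matrix (Fin r) (Fin r) ℝ := S⁻¹ with hTdef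
  have hdet : IsUnit S.det := hPD.det_pos.ne'.isUnit
  have hST : S * T = 1 := mul_nonsing_inv S hdet
  have hTS : T * S = 1 := nonsing_inv_mul S hdet
  have hTt : Tᵀ = T := by
    have := hPD.isHermitian.inv
    simpa [Matrix.IsHermitian, conjTranspose_eq_transpose_of_trivial, Matrix.map_id'] using this
  have e1 : ∀ (k : ℕ) (Y : Matrix (Fin r) (Fin k) ℝ), T * (S * Y) = Y := by
    intro k Y; rw [← Matrix.mul_assoc, hTS, Matrix.one_mul]
  have e2 : ∀ (k : ℕ) (Y : Matrix (Fin r) (Fin k) ℝ), S * (T * Y) = Y := by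
    intro k Y; rw [← Matrix.mul_assoc, hST, Matrix.one_mul]
  have hPt : Pᵀ = P := by
    have := hP.isHermitian
    simpa [Matrix.IsHermitian, conjTranspose_eq_transpose_of_trivial, Matrix.map_id'] using this
  have key : ε • (Eᵀ * E) + Xᵀ * P * D * T * Dᵀ * P * X + Xᵀ * P * X
      - (X + D * F * E)ᵀ * P * (X + D * F * E)
    = (T * (Dᵀ * P * X) - F * E)ᵀ * S * (T * (Dᵀ * P * X) - F * E)
      + Eᵀ * (ε • ((1 : Matrix (Fin q) (Fin q) ℝ) - Fᵀ * F)) * E := by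
    simp only [transpose_sub, transpose_mul, transpose_add, transpose_transpose, hTt, hPt,
      Matrix.sub_mul, Matrix.mul_sub, Matrix.add_mul, Matrix.mul_add, Matrix.mul_assoc,
      Matrix.smul_mul, Matrix.mul_smul, Matrix.mul_one, Matrix.one_mul, smul_sub,
      e1, e2]
    rw [hSdef]
    simp only [Matrix.sub_mul, Matrix.mul_sub, Matrix.smul_mul, Matrix.mul_smul,
      Matrix.one_mul, Matrix.mul_one, Matrix.mul_assoc, smul_sub]
    abel
  rw [key]
  have hM : ((T * (Dᵀ * P * X) - F * E)ᵀ * S * (T * (Dᵀ * P * X) - F * E)).PosSemidef := by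
    have := hPD.posSemidef.conjTranspose_mul_mul_same (T * (Dᵀ * P * X) - F * E)
    simpa [conjTranspose_eq_transpose_of_trivial, Matrix.map_id'] using this
  have hE : (Eᵀ * (ε • ((1 : Matrix (Fin q) (Fin q) ℝ) - Fᵀ * F)) * E).PosSemidef := by
    have := (smul_posSemidef hF hε.le).conjTranspose_mul_mul_same E
    simpa [conjTranspose_eq_transpose_of_trivial, Matrix.map_id'] using this
  exact hM.add hE
end

section
/- Let P₁₁ ∈ S^n, P₁₂ ∈ ℝ^{n×m}, P₂₂ ∈ S^m, P₁₃ ∈ ℝ^{n×p}, P₂₃ ∈ ℝ^{m×p}, and P₃₃ ∈ S^p. There exists X ∈ ℝ^{m×n} such that the 3×3 symmetric block matrix [[P₁₁, P₁₂ + Xᵀ, P₁₃], [P₁₂ᵀ + X, P₂₂, P₂₃], [P₁₃ᵀ, P₂₃ᵀ, P₃₃]] is negative definite if and only if both 2×2 symmetric block matrices [[P₁₁, P₁₃], [P₁₃ᵀ, P₃₃]] and [[P₂₂, P₂₃], [P₂₃ᵀ, P₃₃]] are negative definite. Moreover, when the latter two conditions hold, X = P₂₃P₃₃⁻¹P₁₃ᵀ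 − P₁₂ᵀ is such a solution. -/
open Matrix

theorem myPosDef.submatrix_inj {α β : Type*} [Fintype α] [Fintype β]
    {M : Matrix β β ℝ} (hM : M.PosDef) (e : α → β) (he : Function.Injective e) :
    (M.submatrix e e).PosDef := by
  classical
  refine posDef_iff_dotProduct_mulVec.mpr ⟨?_, ?_⟩
  · have h := hM.1
    rw [Matrix.IsHermitian, conjTranspose_submatrix, h.eq]
  · intro x hx
    set y : β → ℝ := Function.extend e x 0 with hy
    have hye : ∀ i, y (e i) = x i := fun i => he.extend_apply x 0 i
    have hy0 : ∀ j, j ∉ Finset.univ.image e → y j = 0 := by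
      intro j hj
      have hne : ¬ ∃ i, e i = j := by
        rintro ⟨i, rfl⟩; exact hj (Finset.mem_image_of_mem e (Finset.mem_univ i))
      simp [hy, Function.extend_def, hne]
    have hyne : y ≠ 0 := by
      intro h0
      apply hx; funext i
      have := congrFun h0 (e i)
      rw [hye] at this; exact this
    have inner : ∀ j, (∑ k, M j k * y k) = ∑ i, M j (e i) * x i := by
      intro j
      rw [← Finset.sum_subset (Finset.subset_univ (Finset.univ.image e))
            (fun k _ hk => by rw [hy0 k hk, mul_zero]),
          Finset.sum_image (fun a _ b _ h => he h)]
      simp [hye]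
    have hkey : dotProduct (star x) ((M.submatrix e e) *ᵥ x)
        = dotProduct (star y) (M *ᵥ y) := by
      simp only [dotProduct, mulVec, Pi.star_apply, star_trivial, submatrix_apply]
      rw [← Finset.sum_subset (Finset.subset_univ (Finset.univ.image e))
            (fun k _ hk => by rw [hy0 k hk, zero_mul]),
          Finset.sum_image (fun a _ b _ h => he h)]
      refine Finset.sum_congr rfl fun i _ => ?_
      rw [hye]
      congr 1
      exact (inner (e i)).symm
    rw [hkey]
    exact hM.dotProduct_mulVec_pos hyne

theorem myPosDef_submatrix_equiv {α β : Type*} [Fintype α] [Fintype β] (e : α ≃ β)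
    {M : Matrix β β ℝ} : (M.submatrix e e).PosDef ↔ M.PosDef := by
  constructor
  · intro h
    have h2 := myPosDef.submatrix_inj h e.symm e.symm.injective
    simpa [Matrix.submatrix_submatrix, Equiv.self_comp_symm] using h2
  · intro h
    exact myPosDef.submatrix_inj h e e.injective

theorem myPosDef_fromBlocks₂₂ {α β : Type*} [Fintype α] [Fintype β] [DecidableEq β]
    {A : Matrix α α ℝ} (B : Matrix α β ℝ) {D : Matrix β β ℝ}
    (hA : A.IsHermitian) (hD : D.PosDef) [Invertible D] :
    (fromBlocks A B Bᴴ D).PosDef ↔ (A - B * D⁻¹ * Bᴴ).PosDef := by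
  have hherm : (fromBlocks A B Bᴴ D).IsHermitian := by
    rw [isHermitian_fromBlocks_iff]
    exact ⟨hA, rfl, conjTranspose_conjTranspose B, hD.1⟩
  have hSherm : (A - B * D⁻¹ * Bᴴ).IsHermitian :=
    (Matrix.IsHermitian.fromBlocks₂₂ A B hD.1).mp hherm
  rw [posDef_iff_dotProduct_mulVec, posDef_iff_dotProduct_mulVec]
  constructor
  · rintro ⟨-, hpos⟩
    refine ⟨hSherm, fun x hx => ?_⟩
    have h := hpos (x := Sum.elim x (-((D⁻¹ * Bᴴ) *ᵥ x)))
      (fun h0 => hx (funext fun i => congrFun h0 (Sum.inl i)))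
    rw [dotProduct_mulVec, Matrix.schur_complement_eq₂₂ A B _ _ hD.1] at h
    simp only [add_neg_cancel, star_zero, zero_vecMul, zero_dotProduct, zero_add] at h
    rwa [dotProduct_mulVec]
  · rintro ⟨hS, hpos⟩
    refine ⟨hherm, fun v hv => ?_⟩
    rw [dotProduct_mulVec, ← Sum.elim_comp_inl_inr v,
      Matrix.schur_complement_eq₂₂ A B _ _ hD.1]
    rcases eq_or_ne (v ∘ Sum.inl) 0 with h1 | h1
    · have h2 : v ∘ Sum.inr ≠ 0 := by
        intro h2
        apply hv
        funext i
        cases i with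
        | inl i => exact congrFun h1 i
        | inr i => exact congrFun h2 i
      rw [h1]
      simp only [mulVec_zero, zero_add, star_zero, zero_vecMul, zero_dotProduct, add_zero]
      rw [← dotProduct_mulVec]
      exact hD.dotProduct_mulVec_pos h2
    · apply add_pos_of_nonneg_of_pos
      · rw [← dotProduct_mulVec]
        exact hD.posSemidef.dotProduct_mulVec_nonneg _
      · rw [← dotProduct_mulVec]
        exact hpos h1

noncomputable def myPosDef_invertible {α : Type*} [Fintype α] [DecidableEq α] {M : Matrix α α ℝ}
    (hM : M.PosDef) : Invertible M :=
  M.invertibleOfIsUnitDet (isUnit_iff_ne_zero.mpr hM.det_pos.ne')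

theorem myPosDef_fromBlocks_diag {α β : Type*} [Fintype α] [Fintype β] [DecidableEq β]
    {A : Matrix α α ℝ} {D : Matrix β β ℝ} (hA : A.PosDef) (hD : D.PosDef) :
    (fromBlocks A 0 0 D).PosDef := by
  haveI := myPosDef_invertible hD
  have h := (myPosDef_fromBlocks₂₂ (0 : Matrix α β ℝ) hA.1 hD).mpr
    (by simpa using hA)
  simpa using h

theorem myIsSymm.isHermitian {q : Type*} {M : Matrix q q ℝ} (h : M.IsSymm) : M.IsHermitian := by
  show Mᴴ = M
  rw [Matrix.conjTranspose_eq_transpose_of_trivial]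
  exact h.eq

/-- A 3×3 symmetric-pattern block matrix assembled from the indicated blocks. -/
def Matrix.block3 {n m p : Type*} (A : Matrix n n ℝ) (B : Matrix n m ℝ) (C : Matrix n p ℝ)
    (D : Matrix m n ℝ) (E : Matrix m m ℝ) (F : Matrix m p ℝ)
    (G : Matrix p n ℝ) (H : Matrix p m ℝ) (I : Matrix p p ℝ) :
    Matrix (n ⊕ (m ⊕ p)) (n ⊕ (m ⊕ p)) ℝ :=
  Matrix.fromBlocks A (Matrix.fromCols B C) (Matrix.fromRows D G)
    (Matrix.fromBlocks E F H I)

/-- There exists `X` making the 3×3 block matrix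
`[[P₁₁, P₁₂ + Xᵀ, P₁₃], [P₁₂ᵀ + X, P₂₂, P₂₃], [P₁₃ᵀ, P₂₃ᵀ, P₃₃]]` negative definite
iff `[[P₁₁, P₁₃], [P₁₃ᵀ, P₃₃]] < 0` and `[[P₂₂, P₂₃], [P₂₃ᵀ, P₃₃]] < 0`; moreover, in that case
`X = P₂₃P₃₃⁻¹P₁₃ᵀ − P₁₂ᵀ` is such a solution. -/
theorem offdiag_completion_negdef (n m p : ℕ)
    (P11 : Matrix (Fin n) (Fin n) ℝ) (P12 : Matrix (Fin n) (Fin m) ℝ)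
    (P22 : Matrix (Fin m) (Fin m) ℝ) (P13 : Matrix (Fin n) (Fin p) ℝ)
    (P23 : Matrix (Fin m) (Fin p) ℝ) (P33 : Matrix (Fin p) (Fin p) ℝ)
    (hP11 : P11.IsSymm) (hP22 : P22.IsSymm) (hP33 : P33.IsSymm) :
    ((∃ X : Matrix (Fin m) (Fin n) ℝ,
        (-(Matrix.block3 P11 (P12 + Xᵀ) P13 (P12ᵀ + X) P22 P23 P13ᵀ P23ᵀ P33)).PosDef) ↔
      ((-(Matrix.fromBlocks P11 P13 P13ᵀ P33)).PosDef ∧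
        (-(Matrix.fromBlocks P22 P23 P23ᵀ P33)).PosDef))
    ∧ (((-(Matrix.fromBlocks P11 P13 P13ᵀ P33)).PosDef ∧
          (-(Matrix.fromBlocks P22 P23 P23ᵀ P33)).PosDef) →
        (-(Matrix.block3 P11 (P12 + (P23 * P33⁻¹ * P13ᵀ - P12ᵀ)ᵀ) P13
            (P12ᵀ + (P23 * P33⁻¹ * P13ᵀ - P12ᵀ)) P22 P23 P13ᵀ P23ᵀ P33)).PosDef) := by
  
  classical
  have corner2_of : ∀ X : Matrix (Fin m) (Fin n) ℝ,
      (-(Matrix.block3 P11 (P12 + Xᵀ) P13 (P12ᵀ + X) P22 P23 P13ᵀ P23ᵀ P33)).PosDef →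
      (-(Matrix.fromBlocks P22 P23 P23ᵀ P33)).PosDef := by
    intro X hX
    have h := myPosDef.submatrix_inj hX Sum.inr Sum.inr_injective
    have heq : (-(Matrix.block3 P11 (P12 + Xᵀ) P13 (P12ᵀ + X) P22 P23 P13ᵀ P23ᵀ
        P33)).submatrix Sum.inr Sum.inr = -(Matrix.fromBlocks P22 P23 P23ᵀ P33) := by
      ext i j
      rcases i with i | i <;> rcases j with j | j <;> simp [Matrix.block3]
    rwa [heq] at h
  have corner1_of : ∀ X : Matrix (Fin m) (Fin n) ℝ,
      (-(Matrix.block3 P11 (P12 + Xᵀ) P13 (P12ᵀ + X) P22 P23 P13ᵀ P23ᵀ P33)).PosDef →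
      (-(Matrix.fromBlocks P11 P13 P13ᵀ P33)).PosDef := by
    intro X hX
    have he : Function.Injective
        (Sum.map (id : Fin n → Fin n) (Sum.inr : Fin p → Fin m ⊕ Fin p)) := by
      intro a b hab
      cases a <;> cases b <;> simp_all
    have h := myPosDef.submatrix_inj hX _ he
    have heq : (-(Matrix.block3 P11 (P12 + Xᵀ) P13 (P12ᵀ + X) P22 P23 P13ᵀ P23ᵀ
        P33)).submatrix (Sum.map id Sum.inr) (Sum.map id Sum.inr)
        = -(Matrix.fromBlocks P11 P13 P13ᵀ P33) := by
      ext i j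
      rcases i with i | i <;> rcases j with j | j <;> simp [Matrix.block3]
    rwa [heq] at h
  have main : ((-(Matrix.fromBlocks P11 P13 P13ᵀ P33)).PosDef ∧
          (-(Matrix.fromBlocks P22 P23 P23ᵀ P33)).PosDef) →
        (-(Matrix.block3 P11 (P12 + (P23 * P33⁻¹ * P13ᵀ - P12ᵀ)ᵀ) P13
            (P12ᵀ + (P23 * P33⁻¹ * P13ᵀ - P12ᵀ)) P22 P23 P13ᵀ P23ᵀ P33)).PosDef := by
    rintro ⟨h1, h2⟩
    have h33 : (-P33).PosDef := by
      have h := myPosDef.submatrix_inj h1 Sum.inr Sum.inr_injective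
      have heq : (-(Matrix.fromBlocks P11 P13 P13ᵀ P33)).submatrix Sum.inr Sum.inr
          = -P33 := by
        ext i j; simp
      rwa [heq] at h
    haveI := myPosDef_invertible h33
    haveI : Invertible P33 := by
      have h := invertibleNeg (-P33); rwa [neg_neg] at h
    have hdet : IsUnit P33.det := P33.isUnit_det_of_invertible
    have hinvneg : (-P33)⁻¹ = -(P33⁻¹) := by
      apply Matrix.inv_eq_right_inv
      rw [neg_mul_neg, Matrix.mul_nonsing_inv _ hdet]
    have hinvT : (P33⁻¹)ᵀ = P33⁻¹ := by
      rw [Matrix.transpose_nonsing_inv, hP33.eq]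
    have hVT : (P23 * P33⁻¹ * P13ᵀ)ᵀ = P13 * P33⁻¹ * P23ᵀ := by
      rw [Matrix.transpose_mul, Matrix.transpose_mul, Matrix.transpose_transpose, hinvT,
        Matrix.mul_assoc]
    have hU : P12 + (P23 * P33⁻¹ * P13ᵀ - P12ᵀ)ᵀ = P13 * P33⁻¹ * P23ᵀ := by
      rw [Matrix.transpose_sub, hVT, Matrix.transpose_transpose]; abel
    have hL : P12ᵀ + (P23 * P33⁻¹ * P13ᵀ - P12ᵀ) = P23 * P33⁻¹ * P13ᵀ := by abel
    rw [hU, hL]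
    rw [← myPosDef_submatrix_equiv (Equiv.sumAssoc (Fin n) (Fin m) (Fin p))]
    have heq : (-(Matrix.block3 P11 (P13 * P33⁻¹ * P23ᵀ) P13 (P23 * P33⁻¹ * P13ᵀ) P22 P23
          P13ᵀ P23ᵀ P33)).submatrix (Equiv.sumAssoc (Fin n) (Fin m) (Fin p))
          (Equiv.sumAssoc (Fin n) (Fin m) (Fin p))
        = Matrix.fromBlocks
            (Matrix.fromBlocks (-P11) (-(P13 * P33⁻¹ * P23ᵀ)) (-(P23 * P33⁻¹ * P13ᵀ)) (-P22))
            (Matrix.fromRows (-P13) (-P23)) (Matrix.fromRows (-P13) (-P23))ᴴ (-P33) := by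
      ext i j
      rcases i with (i | i) | i <;> rcases j with (j | j) | j <;>
        simp [Matrix.block3]
    rw [heq]
    have hAherm : (Matrix.fromBlocks (-P11) (-(P13 * P33⁻¹ * P23ᵀ))
        (-(P23 * P33⁻¹ * P13ᵀ)) (-P22)).IsHermitian := by
      rw [Matrix.isHermitian_fromBlocks_iff]
      refine ⟨(myIsSymm.isHermitian hP11).neg, ?_, ?_, (myIsSymm.isHermitian hP22).neg⟩
      · rw [Matrix.conjTranspose_neg, Matrix.conjTranspose_eq_transpose_of_trivial, ← hVT,
          Matrix.transpose_transpose]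
      · rw [Matrix.conjTranspose_neg, Matrix.conjTranspose_eq_transpose_of_trivial, hVT]
    rw [myPosDef_fromBlocks₂₂ (Matrix.fromRows (-P13) (-P23)) hAherm h33]
    have hBH : (Matrix.fromRows (-P13) (-P23) : Matrix (Fin n ⊕ Fin m) (Fin p) ℝ)ᴴ
        = Matrix.fromCols (-P13ᵀ) (-P23ᵀ) := by
      ext i j
      rcases j with j | j <;> simp
    have hS1 : (-(P11 - P13 * P33⁻¹ * P13ᵀ)).PosDef := by
      have e1 : -(Matrix.fromBlocks P11 P13 P13ᵀ P33)
          = Matrix.fromBlocks (-P11) (-P13) ((-P13) : Matrix (Fin n) (Fin p) ℝ)ᴴ (-P33) := by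
        rw [Matrix.fromBlocks_neg]
        congr 1
      have h1' := (myPosDef_fromBlocks₂₂ (-P13) (myIsSymm.isHermitian hP11).neg h33).mp
        (by rwa [e1] at h1)
      have e2 : (-P11) - (-P13) * (-P33)⁻¹ * ((-P13) : Matrix (Fin n) (Fin p) ℝ)ᴴ
          = -(P11 - P13 * P33⁻¹ * P13ᵀ) := by
        rw [hinvneg, (show ((-P13) : Matrix (Fin n) (Fin p) ℝ)ᴴ = -(P13ᵀ) by ext i j; simp)]
        simp only [Matrix.neg_mul, Matrix.mul_neg, neg_neg]
        abel
      rwa [e2] at h1'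
    have hS2 : (-(P22 - P23 * P33⁻¹ * P23ᵀ)).PosDef := by
      have e1 : -(Matrix.fromBlocks P22 P23 P23ᵀ P33)
          = Matrix.fromBlocks (-P22) (-P23) ((-P23) : Matrix (Fin m) (Fin p) ℝ)ᴴ (-P33) := by
        rw [Matrix.fromBlocks_neg]
        congr 1
      have h2' := (myPosDef_fromBlocks₂₂ (-P23) (myIsSymm.isHermitian hP22).neg h33).mp
        (by rwa [e1] at h2)
      have e2 : (-P22) - (-P23) * (-P33)⁻¹ * ((-P23) : Matrix (Fin m) (Fin p) ℝ)ᴴ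
          = -(P22 - P23 * P33⁻¹ * P23ᵀ) := by
        rw [hinvneg, (show ((-P23) : Matrix (Fin m) (Fin p) ℝ)ᴴ = -(P23ᵀ) by ext i j; simp)]
        simp only [Matrix.neg_mul, Matrix.mul_neg, neg_neg]
        abel
      rwa [e2] at h2'
    have hcalc : Matrix.fromBlocks (-P11) (-(P13 * P33⁻¹ * P23ᵀ)) (-(P23 * P33⁻¹ * P13ᵀ)) (-P22)
        - Matrix.fromRows (-P13) (-P23) * (-P33)⁻¹ * (Matrix.fromRows (-P13) (-P23))ᴴ
        = Matrix.fromBlocks (-(P11 - P13 * P33⁻¹ * P13ᵀ)) 0 0 (-(P22 - P23 * P33⁻¹ * P23ᵀ)) := by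
      rw [hBH, hinvneg, Matrix.fromRows_mul, Matrix.fromRows_mul_fromCols]
      simp only [Matrix.mul_neg, Matrix.neg_mul, neg_neg]
      ext i j
      rcases i with i | i <;> rcases j with j | j <;>
        simp [Matrix.fromBlocks, Matrix.mul_assoc] <;> ring
    rw [hcalc]
    exact myPosDef_fromBlocks_diag hS1 hS2
  refine ⟨⟨?_, fun h => ⟨_, main h⟩⟩, main⟩
  rintro ⟨X, hX⟩
  exact ⟨corner1_of X hX, corner2_of X hX⟩
end

section
/- Let X ∈ S^n, H ∈ ℝ^{m×n}, G ∈ ℝ^{m×m}, and let P ∈ S^m be positive definite. If the symmetric block matrix [[X, Hᵀ], [H, G + Gᵀ − P]] is positive definite, then G is invertible and X − HᵀG⁻¹PG⁻ᵀH is positive definite (where G⁻ᵀ = (G⁻¹)ᵀ). -/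
open Matrix

lemma posdef_congr_aux {p q : Type*} [Fintype p] [Fintype q]
    {M : Matrix p p ℝ} (hM : M.PosDef) (E : Matrix p q ℝ)
    (hE : Function.Injective E.mulVec) : (Eᵀ * M * E).PosDef := by
  refine Matrix.PosDef.of_dotProduct_mulVec_pos ?_ ?_
  · have hMt : Mᵀ = M := by
      have := hM.isHermitian
      rw [← Matrix.conjTranspose_eq_transpose_of_trivial]; exact this
    show (Eᵀ * M * E)ᴴ = _
    simp [Matrix.conjTranspose_mul, Matrix.mul_assoc, hMt]
  · intro x hx
    have hEx : E *ᵥ x ≠ 0 := by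
      intro h0
      apply hx
      apply hE
      simpa [Matrix.mulVec_zero] using h0
    have hlt := hM.dotProduct_mulVec_pos hEx
    have key : (Eᵀ * M * E) *ᵥ x = Eᵀ *ᵥ (M *ᵥ (E *ᵥ x)) := by
      simp [Matrix.mulVec_mulVec, Matrix.mul_assoc]
    have : star x ⬝ᵥ ((Eᵀ * M * E) *ᵥ x) = star (E *ᵥ x) ⬝ᵥ (M *ᵥ (E *ᵥ x)) := by
      rw [key, Matrix.dotProduct_mulVec, Matrix.vecMul_transpose]
      simp [star_trivial]
    rw [this]
    exact hlt

/-- If `[[X, Hᵀ], [H, G + Gᵀ − P]]` is positive definite (with `X` symmetric and `P`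
positive definite), then `G` is invertible and `X − HᵀG⁻¹PG⁻ᵀH` is positive definite. -/
theorem posdef_block_implies_quadratic_bound (n m : ℕ)
    (X : Matrix (Fin n) (Fin n) ℝ) (H : Matrix (Fin m) (Fin n) ℝ)
    (G : Matrix (Fin m) (Fin m) ℝ) (P : Matrix (Fin m) (Fin m) ℝ)
    (hX : X.IsSymm) (hP : P.PosDef)
    (h : (Matrix.fromBlocks X Hᵀ H (G + Gᵀ - P)).PosDef) :
    IsUnit G ∧ (X - Hᵀ * G⁻¹ * P * (G⁻¹)ᵀ * H).PosDef := by
  have hG : IsUnit G := by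
    rw [← Matrix.mulVec_injective_iff_isUnit]
    intro v w hvw
    by_contra hne
    have hu : v - w ≠ 0 := sub_ne_zero.mpr hne
    have hGu : G *ᵥ (v - w) = 0 := by
      rw [Matrix.mulVec_sub, hvw, sub_self]
    have hGtu : (v - w) ⬝ᵥ (Gᵀ *ᵥ (v - w)) = 0 := by
      rw [Matrix.dotProduct_mulVec, Matrix.vecMul_transpose, hGu, zero_dotProduct]
    have hq := h.dotProduct_mulVec_pos (x := Sum.elim 0 (v - w)) (by
      intro h0
      apply hu
      funext i
      exact congrFun h0 (Sum.inr i))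
    have hPq := hP.dotProduct_mulVec_pos hu
    simp only [star_trivial] at hq hPq
    simp only [Matrix.fromBlocks_mulVec, Matrix.mulVec_zero, zero_add,
      Matrix.sub_mulVec, Matrix.add_mulVec, sumElim_dotProduct_sumElim,
      zero_dotProduct, dotProduct_add, dotProduct_sub,
      Sum.elim_comp_inl, Sum.elim_comp_inr,
      hGu, dotProduct_zero, hGtu] at hq
    linarith
  have hGd : IsUnit G.det := (Matrix.isUnit_iff_isUnit_det G).mp hG
  have hGi : G⁻¹ * G = 1 := Matrix.nonsing_inv_mul G hGd
  have hGi' : Gᵀ * G⁻¹ᵀ = 1 := by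
    rw [← Matrix.transpose_mul, hGi, Matrix.transpose_one]
  refine ⟨hG, ?_⟩
  set K : Matrix (Fin m) (Fin n) ℝ := -(G⁻¹ᵀ * H) with hK
  set E := Matrix.fromRows (1 : Matrix (Fin n) (Fin n) ℝ) K with hE
  have hEinj : Function.Injective E.mulVec := by
    intro v w hvw
    have := congrFun hvw
    funext i
    have h1 := this (Sum.inl i)
    simpa [hE, Matrix.fromRows_mulVec] using h1
  have e1 : Hᵀ * G⁻¹ * (G * (G⁻¹ᵀ * H)) = Hᵀ * G⁻¹ᵀ * H := by
    rw [← Matrix.mul_assoc, Matrix.mul_assoc Hᵀ G⁻¹ G, hGi, Matrix.mul_one,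
      ← Matrix.mul_assoc]
  have e2 : Hᵀ * G⁻¹ * (Gᵀ * (G⁻¹ᵀ * H)) = Hᵀ * G⁻¹ * H := by
    rw [← Matrix.mul_assoc Gᵀ, hGi', Matrix.one_mul]
  have hid : Eᵀ * (Matrix.fromBlocks X Hᵀ H (G + Gᵀ - P)) * E
      = X - Hᵀ * G⁻¹ * P * (G⁻¹)ᵀ * H := by
    rw [hE, Matrix.transpose_fromRows, Matrix.mul_assoc,
      Matrix.fromBlocks_mul_fromRows, Matrix.fromCols_mul_fromRows]
    simp only [hK, Matrix.mul_one, Matrix.one_mul, Matrix.transpose_neg, Matrix.transpose_mul,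
      Matrix.transpose_transpose, Matrix.mul_neg, Matrix.neg_mul, Matrix.sub_mul,
      Matrix.add_mul, Matrix.mul_sub, Matrix.mul_add, neg_neg, e1, e2,
      Matrix.transpose_one,
      Matrix.mul_assoc]
    abel
  have := posdef_congr_aux h E hEinj
  rwa [hid] at this
end

section
/- Let P₁ ∈ S^n, P₂ ∈ S^q, L ∈ ℝ^{n×q}, Q₁ ∈ ℝ^{n×m}, Q₂ ∈ ℝ^{q×p}, R₁ ∈ S^m, and R₂ ∈ S^p. There exists X ∈ S^q such that both symmetric block matrices [[P₁ − LXLᵀ, Q₁], [Q₁ᵀ, R₁]] and [[P₂ + X, Q₂], [Q₂ᵀ, R₂]] are positive definite if and only if the 3×3 symmetric block matrix [[P₁ + LP₂Lᵀ, Q₁, LQ₂], [Q₁ᵀ, R₁, 0], [Q₂ᵀLᵀ, 0, R₂]] is positive definite. -/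
open Matrix

section Aux

variable {k l : Type*} [Fintype k] [Fintype l] [DecidableEq k] [DecidableEq l]

private lemma conjT_real {A : Matrix k l ℝ} : Aᴴ = Aᵀ :=
  Matrix.conjTranspose_eq_transpose_of_trivial A

/-- PosDef is preserved by reindexing along an equiv. -/
private lemma posDef_submatrix_equiv {M : Matrix k k ℝ} (hM : M.PosDef) (e : l ≃ k) :
    (M.submatrix e e).PosDef := by
  refine .of_dotProduct_mulVec_pos ((Matrix.isHermitian_submatrix_equiv e).2 hM.1) fun v hv => ?_
  have hv' : v ∘ e.symm ≠ 0 := fun h => hv (by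
    ext i; simpa using congrFun h (e i))
  have h2 := hM.dotProduct_mulVec_pos hv'
  simpa [Matrix.submatrix_mulVec_equiv, comp_equiv_dotProduct_comp_equiv]
    using h2

private lemma posDef_submatrix_equiv_iff (M : Matrix k k ℝ) (e : l ≃ k) :
    (M.submatrix e e).PosDef ↔ M.PosDef := by
  refine ⟨fun h => ?_, fun h => posDef_submatrix_equiv h e⟩
  have := posDef_submatrix_equiv h e.symm
  simpa using this

/-- The (2,2) corner of a positive definite block matrix is positive definite. -/
private lemma posDef_corner₂₂ {A : Matrix k k ℝ} {B : Matrix k l ℝ} {C : Matrix l k ℝ}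
    {D : Matrix l l ℝ} (h : (Matrix.fromBlocks A B C D).PosDef) : D.PosDef := by
  refine Matrix.PosDef.of_dotProduct_mulVec_pos ?_ ?_
  · have h1 := h.1
    rw [Matrix.IsHermitian, Matrix.fromBlocks_conjTranspose] at h1
    have := congrArg Matrix.toBlocks₂₂ h1
    simpa [Matrix.toBlocks₂₂, Matrix.fromBlocks, Matrix.IsHermitian, ← Matrix.ext_iff, funext_iff] using this
  · intro y hy
    have hne : (Sum.elim (0 : k → ℝ) y) ≠ 0 := fun h0 =>
      hy (funext fun i => congrFun h0 (Sum.inr i))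
    have := h.dotProduct_mulVec_pos hne
    simpa [Matrix.fromBlocks_mulVec, sumElim_dotProduct_sumElim] using this

/-- Real PosDef Schur complement criterion w.r.t. the (2,2) block. -/
private lemma posDef_fromBlocks₂₂ (A : Matrix k k ℝ) (B : Matrix k l ℝ)
    {D : Matrix l l ℝ} (hD : D.PosDef) :
    (Matrix.fromBlocks A B Bᵀ D).PosDef ↔ (A - B * D⁻¹ * Bᵀ).PosDef := by
  haveI := D.invertibleOfIsUnitDet (isUnit_iff_ne_zero.2 hD.det_pos.ne')
  rw [← conjT_real (A := B)]
  simp only [Matrix.posDef_iff_dotProduct_mulVec]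
  rw [Matrix.IsHermitian.fromBlocks₂₂ _ _ hD.1]
  refine and_congr_right fun _ => ?_
  constructor
  · intro h x hx
    have hne : (Sum.elim x (-((D⁻¹ * Bᴴ) *ᵥ x))) ≠ 0 := fun h0 =>
      hx (funext fun i => congrFun h0 (Sum.inl i))
    have key := h hne
    rw [dotProduct_mulVec, Matrix.schur_complement_eq₂₂ A B _ _ hD.1] at key
    simpa [dotProduct_mulVec] using key
  · intro h x hx
    rw [dotProduct_mulVec, ← Sum.elim_comp_inl_inr x,
      Matrix.schur_complement_eq₂₂ A B _ _ hD.1]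
    by_cases hxl : x ∘ Sum.inl = 0
    · have hxr : x ∘ Sum.inr ≠ 0 := fun h0 => hx (by
        rw [← Sum.elim_comp_inl_inr x, hxl, h0]; ext (i | i) <;> simp)
      have h1 : (0:ℝ) < star ((D⁻¹ * Bᴴ) *ᵥ (x ∘ Sum.inl) + x ∘ Sum.inr) ᵥ*
          D ⬝ᵥ ((D⁻¹ * Bᴴ) *ᵥ (x ∘ Sum.inl) + x ∘ Sum.inr) := by
        rw [← dotProduct_mulVec]
        apply hD.dotProduct_mulVec_pos
        simpa [hxl] using hxr
      have h2 : (0:ℝ) ≤ star (x ∘ Sum.inl) ᵥ* (A - B * D⁻¹ * Bᴴ) ⬝ᵥ (x ∘ Sum.inl) := by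
        rw [hxl]
        simp
      linarith
    · have h1 : (0:ℝ) ≤ star ((D⁻¹ * Bᴴ) *ᵥ (x ∘ Sum.inl) + x ∘ Sum.inr) ᵥ*
          D ⬝ᵥ ((D⁻¹ * Bᴴ) *ᵥ (x ∘ Sum.inl) + x ∘ Sum.inr) := by
        rw [← dotProduct_mulVec]
        exact hD.posSemidef.dotProduct_mulVec_nonneg _
      have h2 : (0:ℝ) < star (x ∘ Sum.inl) ᵥ* (A - B * D⁻¹ * Bᴴ) ⬝ᵥ (x ∘ Sum.inl) := by
        rw [← dotProduct_mulVec]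
        exact h hxl
      linarith

/-- Crude quadratic-form upper bound. -/
private lemma exists_quadform_bound (K : Matrix k k ℝ) :
    ∃ c : ℝ, 0 < c ∧ ∀ v : k → ℝ, v ⬝ᵥ (K *ᵥ v) ≤ c * (v ⬝ᵥ v) := by
  refine ⟨(∑ i, ∑ j, |K i j|) + 1, by positivity, fun v => ?_⟩
  have hvv : ∀ i j : k, |v i| * |v j| ≤ v ⬝ᵥ v := by
    intro i j
    have h1 : v i ^ 2 ≤ v ⬝ᵥ v := by
      have : ∀ t : k, t ∈ Finset.univ → (0:ℝ) ≤ v t * v t := fun t _ => mul_self_nonneg _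
      have := Finset.single_le_sum this (Finset.mem_univ i)
      simpa [dotProduct, sq] using this
    have h2 : v j ^ 2 ≤ v ⬝ᵥ v := by
      have : ∀ t : k, t ∈ Finset.univ → (0:ℝ) ≤ v t * v t := fun t _ => mul_self_nonneg _
      have := Finset.single_le_sum this (Finset.mem_univ j)
      simpa [dotProduct, sq] using this
    nlinarith [abs_nonneg (v i), abs_nonneg (v j), sq_abs (v i), sq_abs (v j),
      sq_nonneg (|v i| - |v j|)]
  have hexp : v ⬝ᵥ (K *ᵥ v) = ∑ i, ∑ j, v i * (K i j * v j) := by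
    simp [dotProduct, Matrix.mulVec, Finset.mul_sum]
  rw [hexp]
  have hle : ∑ i, ∑ j, v i * (K i j * v j) ≤ ∑ i : k, ∑ j : k, |K i j| * (v ⬝ᵥ v) := by
    refine Finset.sum_le_sum fun i _ => Finset.sum_le_sum fun j _ => ?_
    calc v i * (K i j * v j) ≤ |v i * (K i j * v j)| := le_abs_self _
      _ = |K i j| * (|v i| * |v j|) := by rw [abs_mul, abs_mul]; ring
      _ ≤ |K i j| * (v ⬝ᵥ v) := by
          exact mul_le_mul_of_nonneg_left (hvv i j) (abs_nonneg _)
  have hnn : 0 ≤ v ⬝ᵥ v := by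
    simpa using dotProduct_star_self_nonneg v
  calc ∑ i, ∑ j, v i * (K i j * v j) ≤ ∑ i : k, ∑ j : k, |K i j| * (v ⬝ᵥ v) := hle
    _ = (∑ i, ∑ j, |K i j|) * (v ⬝ᵥ v) := by simp [Finset.sum_mul]
    _ ≤ ((∑ i, ∑ j, |K i j|) + 1) * (v ⬝ᵥ v) := by nlinarith

open scoped MatrixOrder in
/-- Quadratic-form lower bound for positive definite matrices. -/
private lemma posDef_quadform_lower {N : Matrix k k ℝ} (hN : N.PosDef) :
    ∃ μ : ℝ, 0 < μ ∧ ∀ v : k → ℝ, μ * (v ⬝ᵥ v) ≤ v ⬝ᵥ (N *ᵥ v) := by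
  obtain ⟨c, hc, hbound⟩ := exists_quadform_bound N⁻¹
  set S := CFC.sqrt N with hSdef
  have hSS : S * S = N := CFC.sqrt_mul_sqrt_self N hN.posSemidef.nonneg
  have hST : Sᵀ = S := by
    have := (CFC.sqrt_nonneg N).posSemidef.1
    rwa [Matrix.IsHermitian, conjT_real] at this
  have hdet : IsUnit S.det := by
    have hdN : N.det ≠ 0 := hN.det_pos.ne'
    rw [← hSS, Matrix.det_mul] at hdN
    exact isUnit_iff_ne_zero.2 (fun h => hdN (by rw [h, mul_zero]))
  haveI := S.invertibleOfIsUnitDet hdet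
  refine ⟨c⁻¹, by positivity, fun v => ?_⟩
  have key := hbound (S *ᵥ v)
  have e1 : N⁻¹ *ᵥ (S *ᵥ v) = S⁻¹ *ᵥ v := by
    rw [Matrix.mulVec_mulVec]
    congr 1
    rw [← hSS, Matrix.mul_inv_rev, Matrix.inv_mul_cancel_right_of_invertible]
  have e2 : (S *ᵥ v) ⬝ᵥ (S⁻¹ *ᵥ v) = v ⬝ᵥ v := by
    have hsv : S *ᵥ v = v ᵥ* S := by rw [← Matrix.mulVec_transpose, hST]
    rw [hsv, ← Matrix.dotProduct_mulVec, Matrix.mulVec_mulVec,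
      Matrix.mul_inv_of_invertible, Matrix.one_mulVec]
  have e3 : (S *ᵥ v) ⬝ᵥ (S *ᵥ v) = v ⬝ᵥ (N *ᵥ v) := by
    nth_rewrite 1 [show S *ᵥ v = v ᵥ* S by rw [← Matrix.mulVec_transpose, hST]]
    rw [← Matrix.dotProduct_mulVec, Matrix.mulVec_mulVec, hSS]
  rw [e1, e2, e3] at key
  rw [inv_mul_le_iff₀ hc]
  linarith [key]

/-- Openness: a posdef matrix stays posdef after subtracting a small multiple of a
Hermitian matrix. -/
private lemma exists_posDef_sub_smul {N C : Matrix k k ℝ} (hN : N.PosDef)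
    (hC : C.IsHermitian) : ∃ ε : ℝ, 0 < ε ∧ (N - ε • C).PosDef := by
  obtain ⟨μ, hμ, hμle⟩ := posDef_quadform_lower hN
  obtain ⟨c, hc, hcle⟩ := exists_quadform_bound C
  refine ⟨μ / (2 * c), by positivity, .of_dotProduct_mulVec_pos ?_ fun v hv => ?_⟩
  · have h1 := hN.1
    rw [Matrix.IsHermitian] at h1 ⊢
    rw [Matrix.conjTranspose_sub, Matrix.conjTranspose_smul, h1, hC]
    simp
  · have h1 := hμle v
    have h2 := hcle v
    have hvv : 0 < v ⬝ᵥ v := by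
      have := Matrix.dotProduct_star_self_pos_iff (v := v)
      simpa using this.2 hv
    have hq : star v ⬝ᵥ ((N - (μ / (2 * c)) • C) *ᵥ v)
        = v ⬝ᵥ (N *ᵥ v) - (μ / (2 * c)) * (v ⬝ᵥ (C *ᵥ v)) := by
      simp [Matrix.sub_mulVec, Matrix.smul_mulVec, dotProduct_sub, dotProduct_smul,
        smul_eq_mul]
    rw [hq]
    have hεc : (μ / (2 * c)) * c = μ / 2 := by field_simp
    have h3 : (μ / (2 * c)) * (v ⬝ᵥ (C *ᵥ v)) ≤ (μ / (2 * c)) * (c * (v ⬝ᵥ v)) :=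
      mul_le_mul_of_nonneg_left h2 (by positivity)
    have h4 : (μ / (2 * c)) * (c * (v ⬝ᵥ v)) = (μ / 2) * (v ⬝ᵥ v) := by
      rw [← mul_assoc, hεc]
    nlinarith

/-- PosSemidef embedding of a corner block. -/
private lemma posSemidef_fromBlocks_corner {C : Matrix k k ℝ} (hC : C.PosSemidef) :
    (Matrix.fromBlocks C 0 (0 : Matrix l k ℝ) (0 : Matrix l l ℝ)).PosSemidef := by
  refine Matrix.PosSemidef.of_dotProduct_mulVec_nonneg ?_ ?_
  · rw [Matrix.IsHermitian, Matrix.fromBlocks_conjTranspose, hC.1]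
    simp
  · intro v
    have hv : v = Sum.elim (v ∘ Sum.inl) (v ∘ Sum.inr) := (Sum.elim_comp_inl_inr v).symm
    rw [hv]
    simp only [star_trivial, Matrix.fromBlocks_mulVec, sumElim_dotProduct_sumElim,
      Matrix.mulVec_zero, Matrix.zero_mulVec, add_zero, zero_add, dotProduct_zero]
    simpa using hC.dotProduct_mulVec_nonneg (v ∘ Sum.inl)

private lemma smul_one_posDef {ε : ℝ} (hε : 0 < ε) :
    (ε • (1 : Matrix k k ℝ)).PosDef := by
  refine .of_dotProduct_mulVec_pos (by simp [Matrix.IsHermitian]) fun v hv => ?_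
  have hvv : 0 < v ⬝ᵥ v := by
    have := Matrix.dotProduct_star_self_pos_iff (v := v)
    simpa using this.2 hv
  simp only [Matrix.smul_mulVec, Matrix.one_mulVec, dotProduct_smul, smul_eq_mul,
    star_trivial]
  positivity

private lemma fromBlocks_sub_corner (A B : Matrix k k ℝ) (C : Matrix k l ℝ)
    (D : Matrix l k ℝ) (E : Matrix l l ℝ) :
    Matrix.fromBlocks (A - B) C D E
      = Matrix.fromBlocks A C D E - Matrix.fromBlocks B 0 0 0 := by
  ext (i | i) (j | j) <;> simp

private lemma fromBlocks_add_corner (A B : Matrix k k ℝ) (C : Matrix k l ℝ)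
    (D : Matrix l k ℝ) (E : Matrix l l ℝ) :
    Matrix.fromBlocks (A + B) C D E
      = Matrix.fromBlocks A C D E + Matrix.fromBlocks B 0 0 0 := by
  ext (i | i) (j | j) <;> simp

end Aux

/-- There exists a symmetric `X ∈ S^q` with `[[P₁ − LXLᵀ, Q₁], [Q₁ᵀ, R₁]] > 0` and
`[[P₂ + X, Q₂], [Q₂ᵀ, R₂]] > 0` iff
`[[P₁ + LP₂Lᵀ, Q₁, LQ₂], [Q₁ᵀ, R₁, 0], [Q₂ᵀLᵀ, 0, R₂]] > 0`. -/
theorem two_posdef_blocks_iff_big_block (n q m p : ℕ)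
    (P1 : Matrix (Fin n) (Fin n) ℝ) (P2 : Matrix (Fin q) (Fin q) ℝ)
    (L : Matrix (Fin n) (Fin q) ℝ) (Q1 : Matrix (Fin n) (Fin m) ℝ)
    (Q2 : Matrix (Fin q) (Fin p) ℝ) (R1 : Matrix (Fin m) (Fin m) ℝ)
    (R2 : Matrix (Fin p) (Fin p) ℝ)
    (hP1 : P1.IsSymm) (hP2 : P2.IsSymm) (hR1 : R1.IsSymm) (hR2 : R2.IsSymm) :
    (∃ X : Matrix (Fin q) (Fin q) ℝ, X.IsSymm ∧
        (Matrix.fromBlocks (P1 - L * X * Lᵀ) Q1 Q1ᵀ R1).PosDef ∧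
        (Matrix.fromBlocks (P2 + X) Q2 Q2ᵀ R2).PosDef) ↔
      (Matrix.block3 (P1 + L * P2 * Lᵀ) Q1 (L * Q2) Q1ᵀ R1 0 (L * Q2)ᵀ 0 R2).PosDef := by
  set A₀ : Matrix (Fin n) (Fin n) ℝ := P1 + L * P2 * Lᵀ with hA₀
  set S : Matrix (Fin q) (Fin q) ℝ := Q2 * R2⁻¹ * Q2ᵀ with hS
  set B₂ : Matrix (Fin n ⊕ Fin m) (Fin p) ℝ := Matrix.fromRows (L * Q2) 0 with hB₂
  set M₁₁ : Matrix (Fin n ⊕ Fin m) (Fin n ⊕ Fin m) ℝ :=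
    Matrix.fromBlocks A₀ Q1 Q1ᵀ R1 with hM₁₁
  set Big2 : Matrix ((Fin n ⊕ Fin m) ⊕ Fin p) ((Fin n ⊕ Fin m) ⊕ Fin p) ℝ :=
    Matrix.fromBlocks M₁₁ B₂ B₂ᵀ R2 with hBig2
  set e : (Fin n ⊕ Fin m) ⊕ Fin p ≃ Fin n ⊕ (Fin m ⊕ Fin p) :=
    Equiv.sumAssoc (Fin n) (Fin m) (Fin p) with he
  -- identification of the block3 matrix with the reindexed 2×2 block matrix
  have hb3 : Matrix.block3 A₀ Q1 (L * Q2) Q1ᵀ R1 0 (L * Q2)ᵀ 0 R2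
      = Big2.submatrix e.symm e.symm := by
    rw [hBig2, hB₂, hM₁₁]
    rw [Matrix.transpose_fromRows, Matrix.transpose_zero]
    ext (i | i | i) (j | j | j) <;> rfl
  -- Schur complement correction term
  have hcorr : B₂ * R2⁻¹ * B₂ᵀ
      = Matrix.fromBlocks (L * S * Lᵀ) 0 0 0 := by
    have h1 : B₂ * R2⁻¹ = Matrix.fromRows (L * Q2 * R2⁻¹) 0 := by
      rw [hB₂, Matrix.fromRows_mul, Matrix.zero_mul]
    have h2 : B₂ᵀ = Matrix.fromCols (L * Q2)ᵀ 0 := by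
      rw [hB₂, Matrix.transpose_fromRows, Matrix.transpose_zero]
    rw [h1, h2, Matrix.fromRows_mul_fromCols]
    congr 1 <;> simp [hS, Matrix.transpose_mul, Matrix.mul_assoc]
  have hschur : M₁₁ - B₂ * R2⁻¹ * B₂ᵀ
      = Matrix.fromBlocks (A₀ - L * S * Lᵀ) Q1 Q1ᵀ R1 := by
    rw [hcorr, hM₁₁, fromBlocks_sub_corner]
  constructor
  · rintro ⟨X, hX, hM1, hM2⟩
    have hR2pd : R2.PosDef := posDef_corner₂₂ hM2
    have hschur2 : (P2 + X - Q2 * R2⁻¹ * Q2ᵀ).PosDef :=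
      (posDef_fromBlocks₂₂ (P2 + X) Q2 hR2pd).1 hM2
    have hW : (L * (P2 + X - S) * Lᵀ).PosSemidef := by
      have := hschur2.posSemidef.mul_mul_conjTranspose_same L
      rwa [conjT_real, ← hS] at this
    have hT : (Matrix.fromBlocks (A₀ - L * S * Lᵀ) Q1 Q1ᵀ R1).PosDef := by
      have heq : A₀ - L * S * Lᵀ = (P1 - L * X * Lᵀ) + L * (P2 + X - S) * Lᵀ := by
        have hd : L * (P2 + X - S) * Lᵀ = L * P2 * Lᵀ + L * X * Lᵀ - L * S * Lᵀ := by
          rw [Matrix.mul_sub, Matrix.mul_add, Matrix.sub_mul, Matrix.add_mul]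
        rw [hd, hA₀]
        abel
      rw [heq, fromBlocks_add_corner]
      exact hM1.add_posSemidef (posSemidef_fromBlocks_corner hW)
    have hBig2pd : Big2.PosDef := by
      rw [hBig2]
      rw [posDef_fromBlocks₂₂ M₁₁ B₂ hR2pd, hschur]
      exact hT
    rw [hb3]
    exact posDef_submatrix_equiv hBig2pd e.symm
  · intro h
    rw [hb3, posDef_submatrix_equiv_iff] at h
    have hR2pd : R2.PosDef := posDef_corner₂₂ h
    have hT : (Matrix.fromBlocks (A₀ - L * S * Lᵀ) Q1 Q1ᵀ R1).PosDef := by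
      rw [← hschur]
      exact (posDef_fromBlocks₂₂ M₁₁ B₂ hR2pd).1 h
    have hCb : (Matrix.fromBlocks (L * Lᵀ) 0 (0 : Matrix (Fin m) (Fin n) ℝ)
        (0 : Matrix (Fin m) (Fin m) ℝ)).IsHermitian := by
      rw [Matrix.IsHermitian, Matrix.fromBlocks_conjTranspose]
      simp [conjT_real, Matrix.transpose_mul]
    obtain ⟨ε, hε, hTsub⟩ := exists_posDef_sub_smul hT hCb
    refine ⟨S - P2 + ε • 1, ?_, ?_, ?_⟩
    · rw [Matrix.IsSymm]
      have hR2inv : R2⁻¹ᵀ = R2⁻¹ := by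
        rw [Matrix.transpose_nonsing_inv, hR2.eq]
      simp [hS, Matrix.transpose_add, Matrix.transpose_sub, Matrix.transpose_mul,
        hR2inv, hP2.eq, Matrix.transpose_smul, Matrix.mul_assoc]
    · -- first block matrix
      have hLXL : L * (S - P2 + ε • 1) * Lᵀ
          = L * S * Lᵀ - L * P2 * Lᵀ + ε • (L * Lᵀ) := by
        rw [Matrix.mul_add, Matrix.mul_sub, Matrix.add_mul, Matrix.sub_mul]
        simp [Matrix.mul_smul, Matrix.smul_mul]
      have h11 : P1 - L * (S - P2 + ε • 1) * Lᵀ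
          = (A₀ - L * S * Lᵀ) - ε • (L * Lᵀ) := by
        rw [hLXL, hA₀]
        abel
      rw [h11, fromBlocks_sub_corner]
      have hsm : Matrix.fromBlocks (ε • (L * Lᵀ)) 0 (0 : Matrix (Fin m) (Fin n) ℝ)
          (0 : Matrix (Fin m) (Fin m) ℝ)
          = ε • Matrix.fromBlocks (L * Lᵀ) 0 0 0 := by
        rw [Matrix.fromBlocks_smul]
        congr 1 <;> simp
      rw [hsm]
      exact hTsub
    · -- second block matrix
      rw [posDef_fromBlocks₂₂ (P2 + (S - P2 + ε • 1)) Q2 hR2pd]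
      have : P2 + (S - P2 + ε • 1) - Q2 * R2⁻¹ * Q2ᵀ = ε • 1 := by
        rw [hS]; abel
      rw [this]
      exact smul_one_posDef hε
end

section
/- (Iterative convex overbounding, bilinear case) Let Q ∈ S^n, R, R₀ ∈ ℝ^{n×m}, S, S₀ ∈ ℝ^{m×n}, and let W ∈ S^m be positive definite. If the 3×3 symmetric block matrix [[Q + RS₀ + S₀ᵀRᵀ + R₀S + SᵀR₀ᵀ − R₀S₀ − S₀ᵀR₀ᵀ, R − R₀, Sᵀ − S₀ᵀ], [(R − R₀)ᵀ, −W⁻¹, 0], [S − S₀, 0, −W]] is negative definite, then Q + RS + SᵀRᵀ is negative definite. -/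
open Matrix

private lemma dp_trans {k l : Type*} [Fintype k] [Fintype l]
    (P : Matrix k l ℝ) (v : k → ℝ) (w : l → ℝ) :
    v ⬝ᵥ (P *ᵥ w) = (Pᵀ *ᵥ v) ⬝ᵥ w := by
  rw [Matrix.dotProduct_mulVec, Matrix.mulVec_transpose]

/-- Iterative convex overbounding, bilinear case: if the indicated 3×3 block matrix is
negative definite, then the BMI `Q + RS + SᵀRᵀ < 0` holds. -/
theorem iterative_convex_overbounding (n m : ℕ)
    (Q : Matrix (Fin n) (Fin n) ℝ) (R R0 : Matrix (Fin n) (Fin m) ℝ)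
    (S S0 : Matrix (Fin m) (Fin n) ℝ) (W : Matrix (Fin m) (Fin m) ℝ)
    (hQ : Q.IsSymm) (hW : W.PosDef)
    (h : (-(Matrix.block3
        (Q + R * S0 + S0ᵀ * Rᵀ + R0 * S + Sᵀ * R0ᵀ - R0 * S0 - S0ᵀ * R0ᵀ)
        (R - R0) (Sᵀ - S0ᵀ)
        (R - R0)ᵀ (-W⁻¹) 0
        (S - S0) 0 (-W))).PosDef) :
    (-(Q + R * S + Sᵀ * Rᵀ)).PosDef := by
  classical
  have hdetW : IsUnit W.det := isUnit_iff_ne_zero.mpr hW.det_pos.ne'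
  have hWiW : W⁻¹ * W = 1 := Matrix.nonsing_inv_mul W hdetW
  have hWWi : W * W⁻¹ = 1 := Matrix.mul_nonsing_inv W hdetW
  have hWsym : Wᵀ = W := by
    have h1 := hW.isHermitian
    rwa [Matrix.IsHermitian, Matrix.conjTranspose_eq_transpose_of_trivial] at h1
  set A := Q + R * S0 + S0ᵀ * Rᵀ + R0 * S + Sᵀ * R0ᵀ - R0 * S0 - S0ᵀ * R0ᵀ with hA
  set B := R - R0 with hB
  set C := S - S0 with hC
  have hCt : Sᵀ - S0ᵀ = Cᵀ := by rw [hC, Matrix.transpose_sub]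
  have hT : Q + R * S + Sᵀ * Rᵀ = A + B * C + Cᵀ * Bᵀ := by
    rw [hA, hB, hC, Matrix.transpose_sub, Matrix.transpose_sub]
    simp only [Matrix.sub_mul, Matrix.mul_sub]
    abel
  refine Matrix.PosDef.of_dotProduct_mulVec_pos ?_ ?_
  · -- Hermitian
    rw [Matrix.IsHermitian, Matrix.conjTranspose_eq_transpose_of_trivial,
      Matrix.transpose_neg]
    congr 1
    rw [Matrix.transpose_add, Matrix.transpose_add, Matrix.transpose_mul,
      Matrix.transpose_mul, Matrix.transpose_transpose, Matrix.transpose_transpose, hQ.eq]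
    abel
  · intro x hx
    set a := C *ᵥ x with ha
    set b := Bᵀ *ᵥ x with hb
    set u := W *ᵥ b with hu
    set v := W⁻¹ *ᵥ a with hv
    set z : (Fin n ⊕ (Fin m ⊕ Fin m)) → ℝ := Sum.elim x (Sum.elim u v) with hz
    have hz0 : z ≠ 0 := by
      intro h0
      exact hx (funext fun i => congrFun h0 (Sum.inl i))
    have hkey := h.dotProduct_mulVec_pos hz0
    -- basic vector facts
    have hWv : W *ᵥ v = a := by
      rw [hv, Matrix.mulVec_mulVec, hWWi, Matrix.one_mulVec]
    have hWiu : W⁻¹ *ᵥ u = b := by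
      rw [hu, Matrix.mulVec_mulVec, hWiW, Matrix.one_mulVec]
    -- scalar facts
    have e1 : x ⬝ᵥ (B *ᵥ u) = b ⬝ᵥ (W *ᵥ b) := by
      rw [dp_trans, ← hb, ← hu]
    have e2 : x ⬝ᵥ (Cᵀ *ᵥ v) = a ⬝ᵥ (W⁻¹ *ᵥ a) := by
      rw [dp_trans, Matrix.transpose_transpose, ← ha, ← hv]
    have e3 : u ⬝ᵥ b = b ⬝ᵥ (W *ᵥ b) := by
      rw [dotProduct_comm, hu]
    have e4 : u ⬝ᵥ (W⁻¹ *ᵥ u) = b ⬝ᵥ (W *ᵥ b) := by rw [hWiu, e3]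
    have e5 : v ⬝ᵥ a = a ⬝ᵥ (W⁻¹ *ᵥ a) := by
      rw [dotProduct_comm, hv]
    have e6 : v ⬝ᵥ (W *ᵥ v) = a ⬝ᵥ (W⁻¹ *ᵥ a) := by rw [hWv, e5]
    have e7 : x ⬝ᵥ (B *ᵥ a) = b ⬝ᵥ a := by rw [dp_trans, ← hb]
    have e8 : x ⬝ᵥ (Cᵀ *ᵥ b) = a ⬝ᵥ b := by
      rw [dp_trans, Matrix.transpose_transpose, ← ha]
    have e9 : a ⬝ᵥ b = b ⬝ᵥ a := dotProduct_comm a b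
    -- the quadratic form of the big matrix at z
    have hqf : z ⬝ᵥ ((Matrix.block3 A B Cᵀ Bᵀ (-W⁻¹) 0 C 0 (-W)) *ᵥ z)
        = x ⬝ᵥ (A *ᵥ x) + b ⬝ᵥ (W *ᵥ b) + a ⬝ᵥ (W⁻¹ *ᵥ a) := by
      simp only [hz, Matrix.block3, Matrix.fromBlocks_mulVec, Sum.elim_comp_inl,
        Sum.elim_comp_inr, Matrix.fromCols_mulVec_sumElim, Matrix.fromRows_mulVec,
        sumElim_dotProduct_sumElim,
        Matrix.zero_mulVec, add_zero, zero_add, Matrix.neg_mulVec,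
        dotProduct_add, dotProduct_neg, ← hb, ← ha, e1, e2, e3, e4, e5, e6]
      ring
    rw [hCt] at hkey
    have hkey' : x ⬝ᵥ (A *ᵥ x) + b ⬝ᵥ (W *ᵥ b) + a ⬝ᵥ (W⁻¹ *ᵥ a) < 0 := by
      rw [← hqf]
      have := hkey
      rw [Matrix.neg_mulVec, dotProduct_neg] at this
      simpa using this
    -- completion of squares
    have hsq : 0 ≤ (b - v) ⬝ᵥ (W *ᵥ (b - v)) := by
      have := hW.posSemidef.dotProduct_mulVec_nonneg (b - v)
      simpa using this
    have hsq' : (b - v) ⬝ᵥ (W *ᵥ (b - v))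
        = b ⬝ᵥ (W *ᵥ b) - 2 * (b ⬝ᵥ a) + a ⬝ᵥ (W⁻¹ *ᵥ a) := by
      rw [Matrix.mulVec_sub, sub_dotProduct, dotProduct_sub,
        dotProduct_sub, hWv]
      have ev : v ⬝ᵥ (W *ᵥ b) = a ⬝ᵥ b := by
        rw [dp_trans, hWsym, hWv]
      rw [ev, e5, e9]
      ring
    -- final computation for the goal
    have hTx : x ⬝ᵥ ((Q + R * S + Sᵀ * Rᵀ) *ᵥ x)
        = x ⬝ᵥ (A *ᵥ x) + 2 * (b ⬝ᵥ a) := by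
      rw [hT, Matrix.add_mulVec, Matrix.add_mulVec, dotProduct_add,
        dotProduct_add, ← Matrix.mulVec_mulVec, ← Matrix.mulVec_mulVec,
        ← ha, ← hb, e7, e8, e9]
      ring
    rw [Matrix.neg_mulVec, dotProduct_neg]
    have : x ⬝ᵥ ((Q + R * S + Sᵀ * Rᵀ) *ᵥ x) < 0 := by
      rw [hTx]
      nlinarith [hkey', hsq, hsq']
    simpa using this
end

section
/- (Finsler's lemma) Let Ψ ∈ S^n, G ∈ ℝ^{n×m}, and H ∈ ℝ^{n×p}. There exists Λ ∈ ℝ^{m×p} such that Ψ + GΛHᵀ + HΛᵀGᵀ is negative definite if and only if there exists σ ∈ ℝ such that both Ψ − σGGᵀ and Ψ − σHHᵀ are negative definite. -/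
open Matrix

section Aux
variable {N k : ℕ}

lemma dp_self_nonneg (x : Fin N → ℝ) : 0 ≤ x ⬝ᵥ x :=
  Finset.sum_nonneg fun i _ => mul_self_nonneg _

lemma dp_transpose {a b : ℕ} (A : Matrix (Fin a) (Fin b) ℝ) (x : Fin a → ℝ) (y : Fin b → ℝ) :
    x ⬝ᵥ A.mulVec y = (Aᵀ.mulVec x) ⬝ᵥ y := by
  rw [Matrix.dotProduct_mulVec, ← Matrix.mulVec_transpose]

lemma real_posdef_iff (M : Matrix (Fin N) (Fin N) ℝ) :
    M.PosDef ↔ M.IsHermitian ∧ ∀ x : Fin N → ℝ, x ≠ 0 → 0 < x ⬝ᵥ M.mulVec x := by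
  rw [posDef_iff_dotProduct_mulVec]
  constructor
  · rintro ⟨h1, h2⟩; exact ⟨h1, fun x hx => by simpa using h2 hx⟩
  · rintro ⟨h1, h2⟩; exact ⟨h1, fun x hx => by simpa using h2 x hx⟩

lemma real_psd_iff (M : Matrix (Fin N) (Fin N) ℝ) :
    M.PosSemidef ↔ M.IsHermitian ∧ ∀ x : Fin N → ℝ, 0 ≤ x ⬝ᵥ M.mulVec x := by
  rw [posSemidef_iff_dotProduct_mulVec]
  constructor
  · rintro ⟨h1, h2⟩; exact ⟨h1, fun x => by simpa using h2 x⟩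
  · rintro ⟨h1, h2⟩; exact ⟨h1, fun x => by simpa using h2 x⟩

lemma psd_smul {A : Matrix (Fin N) (Fin N) ℝ} (hA : A.PosSemidef) {σ : ℝ} (hσ : 0 ≤ σ) :
    (σ • A).PosSemidef := by
  rw [real_psd_iff] at hA ⊢
  refine ⟨?_, fun x => ?_⟩
  · rw [Matrix.IsHermitian, conjTranspose_smul, hA.1.eq]; simp
  · rw [smul_mulVec, dotProduct_smul, smul_eq_mul]
    exact mul_nonneg hσ (hA.2 x)

lemma smul_one_posdef {ε : ℝ} (hε : 0 < ε) : (ε • (1 : Matrix (Fin N) (Fin N) ℝ)).PosDef := by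
  rw [real_posdef_iff]
  refine ⟨?_, fun x hx => ?_⟩
  · rw [Matrix.IsHermitian, conjTranspose_smul, conjTranspose_one]; simp
  · rw [smul_mulVec, one_mulVec, dotProduct_smul, smul_eq_mul]
    have : 0 < x ⬝ᵥ x := by
      rcases (dp_self_nonneg x).lt_or_eq with h | h
      · exact h
      · exact absurd (dotProduct_self_eq_zero.mp h.symm) hx
    positivity

lemma mulVec_sq_bound {a b : ℕ} (M : Matrix (Fin a) (Fin b) ℝ) :
    ∃ c > 0, ∀ x : Fin b → ℝ, (M.mulVec x) ⬝ᵥ (M.mulVec x) ≤ c * (x ⬝ᵥ x) := by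
  refine ⟨(∑ i, ∑ j, (M i j)^2) + 1, by positivity, fun x => ?_⟩
  have h1 : ∀ i, (M.mulVec x i)^2 ≤ (∑ j, (M i j)^2) * (x ⬝ᵥ x) := by
    intro i
    have h := Finset.sum_mul_sq_le_sq_mul_sq Finset.univ (fun j => M i j) x
    have hx : x ⬝ᵥ x = ∑ j, (x j)^2 := by simp [dotProduct, sq]
    have hm : M.mulVec x i = ∑ j, M i j * x j := by simp [Matrix.mulVec, dotProduct]
    rw [hm, hx]; simpa using h
  have h2 : (M.mulVec x) ⬝ᵥ (M.mulVec x) = ∑ i, (M.mulVec x i)^2 := by simp [dotProduct, sq]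
  calc (M.mulVec x) ⬝ᵥ (M.mulVec x) = ∑ i, (M.mulVec x i)^2 := h2
    _ ≤ ∑ i : Fin a, (∑ j, (M i j)^2) * (x ⬝ᵥ x) := Finset.sum_le_sum fun i _ => h1 i
    _ = (∑ i, ∑ j, (M i j)^2) * (x ⬝ᵥ x) := by rw [Finset.sum_mul]
    _ ≤ ((∑ i, ∑ j, (M i j)^2) + 1) * (x ⬝ᵥ x) := by
        have := dp_self_nonneg x; nlinarith

end Aux

open scoped MatrixOrder in
lemma posdef_lower {N : ℕ} {P : Matrix (Fin N) (Fin N) ℝ} (hP : P.PosDef) :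
    ∃ δ > 0, ∀ x : Fin N → ℝ, δ * (x ⬝ᵥ x) ≤ x ⬝ᵥ P.mulVec x := by
  set S := CFC.sqrt P with hSdef
  have hS : S.PosSemidef := (CFC.sqrt_nonneg P).posSemidef
  have hSS : S * S = P := CFC.sqrt_mul_sqrt_self P (Matrix.PosSemidef.nonneg hP.posSemidef)
  have hsym : Sᵀ = S := by
    have := hS.isHermitian
    rwa [Matrix.IsHermitian, conjTranspose_eq_transpose_of_trivial] at this
  have hdet : IsUnit S.det := by
    have hPdet : 0 < P.det := hP.det_pos
    rw [← hSS, det_mul] at hPdet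
    have : S.det ≠ 0 := fun h => by simp [h] at hPdet
    exact isUnit_iff_ne_zero.mpr this
  obtain ⟨c, hc, hcb⟩ := mulVec_sq_bound S⁻¹
  refine ⟨c⁻¹, by positivity, fun x => ?_⟩
  have hxx : x ⬝ᵥ x ≤ c * ((S.mulVec x) ⬝ᵥ (S.mulVec x)) := by
    have := hcb (S.mulVec x)
    rwa [Matrix.mulVec_mulVec, Matrix.nonsing_inv_mul S hdet, Matrix.one_mulVec] at this
  have hq : x ⬝ᵥ P.mulVec x = (S.mulVec x) ⬝ᵥ (S.mulVec x) := by
    rw [← hSS, ← Matrix.mulVec_mulVec, dp_transpose, hsym]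
  rw [hq]
  have h0 := dp_self_nonneg x
  have h1 := dp_self_nonneg (S.mulVec x)
  rw [inv_mul_le_iff₀ hc] -- maybe name differs
  linarith


-- shrink
lemma posdef_shrink {N : ℕ} {P : Matrix (Fin N) (Fin N) ℝ} (hP : P.PosDef) :
    ∃ ε : ℝ, ε > 0 ∧ (P - ε • (1 : Matrix (Fin N) (Fin N) ℝ)).PosDef := by
  obtain ⟨δ, hδ, hb⟩ := posdef_lower hP
  refine ⟨δ/2, by positivity, ?_⟩
  rw [real_posdef_iff]
  constructor
  · have h1 : P.IsHermitian := hP.isHermitian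
    rw [Matrix.IsHermitian] at h1 ⊢
    rw [conjTranspose_sub, conjTranspose_smul, conjTranspose_one, h1]; simp
  · intro x hx
    have hxx : 0 < x ⬝ᵥ x := by
      rcases (dp_self_nonneg x).lt_or_eq with h | h
      · exact h
      · exact absurd (dotProduct_self_eq_zero.mp h.symm) hx
    have := hb x
    rw [Matrix.sub_mulVec, dotProduct_sub, smul_mulVec, one_mulVec, dotProduct_smul,
      smul_eq_mul]
    nlinarith

-- L3
lemma sub_mul_inv_mul_psd {N : ℕ} {A Q : Matrix (Fin N) (Fin N) ℝ} (hA : A.PosSemidef)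
    (hQ : Q.PosDef) (hQA : (Q - A).PosSemidef) : (A - A * Q⁻¹ * A).PosSemidef := by
  have hdet : IsUnit Q.det := isUnit_iff_ne_zero.mpr hQ.det_pos.ne'
  have hAsym : Aᵀ = A := by
    have := hA.isHermitian; rwa [Matrix.IsHermitian, conjTranspose_eq_transpose_of_trivial] at this
  have hQsym : Qᵀ = Q := by
    have := hQ.isHermitian; rwa [Matrix.IsHermitian, conjTranspose_eq_transpose_of_trivial] at this
  have hRsym : (Q⁻¹)ᵀ = Q⁻¹ := by rw [Matrix.transpose_nonsing_inv, hQsym]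
  rw [real_psd_iff] at hA hQA ⊢
  refine ⟨?_, fun x => ?_⟩
  · have h2 : (A * Q⁻¹ * A).IsHermitian := by
      have h3 := Matrix.isHermitian_mul_mul_conjTranspose A (A := Q⁻¹) hQ.inv.isHermitian
      rwa [hA.1.eq] at h3
    exact hA.1.sub h2
  · set y := Q⁻¹.mulVec (A.mulVec x) with hy
    have hQy : Q.mulVec y = A.mulVec x := by
      rw [hy, Matrix.mulVec_mulVec, Matrix.mul_nonsing_inv Q hdet, Matrix.one_mulVec]
    have t1 := hA.2 (x - y)
    have t2 := hQA.2 y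
    have e1 : x ⬝ᵥ A.mulVec y = y ⬝ᵥ A.mulVec x := by
      rw [dp_transpose, hAsym, dotProduct_comm]
    have e2 : (x - y) ⬝ᵥ A.mulVec (x - y)
        = x ⬝ᵥ A.mulVec x - 2 * (y ⬝ᵥ A.mulVec x) + y ⬝ᵥ A.mulVec y := by
      rw [Matrix.mulVec_sub, dotProduct_sub, sub_dotProduct, sub_dotProduct, e1]; ring
    have e3 : y ⬝ᵥ (Q - A).mulVec y = y ⬝ᵥ A.mulVec x - y ⬝ᵥ A.mulVec y := by
      rw [Matrix.sub_mulVec, dotProduct_sub, hQy]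
    have e4 : x ⬝ᵥ (A - A * Q⁻¹ * A).mulVec x = x ⬝ᵥ A.mulVec x - y ⬝ᵥ A.mulVec x := by
      rw [Matrix.sub_mulVec, dotProduct_sub]
      congr 1
      have : (A * Q⁻¹ * A).mulVec x = A.mulVec y := by
        rw [hy, Matrix.mulVec_mulVec, Matrix.mulVec_mulVec, Matrix.mul_assoc]
      rw [this, e1]
    rw [e4]
    rw [e2] at t1; rw [e3] at t2
    linarith


lemma key_identity {N : ℕ} (A B Ψ' Q R : Matrix (Fin N) (Fin N) ℝ)
    (hQ : Q = A + B - Ψ') (h1 : Q * R = 1) (h2 : R * Q = 1) :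
    Ψ' - A * R * B - B * R * A
      = -((A - A * R * A) + (B - B * R * B) + Ψ' * R * Ψ') := by
  have hS : A + B = Q + Ψ' := by rw [hQ]; abel
  have e0 : A * R * B + B * R * A + A * R * A + B * R * B = (A + B) * R * (A + B) := by
    rw [add_mul, add_mul, mul_add, mul_add]; abel
  have e1 : (Q + Ψ') * R * (Q + Ψ') = Q + Ψ' + Ψ' + Ψ' * R * Ψ' := by
    rw [add_mul, add_mul, mul_add, mul_add, h1, Matrix.one_mul, Matrix.one_mul,
      Matrix.mul_assoc Ψ' R Q, h2, Matrix.mul_one]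
    abel
  have e2 : A * R * B + B * R * A + A * R * A + B * R * B = Q + Ψ' + Ψ' + Ψ' * R * Ψ' := by
    rw [e0, hS, e1]
  have goal' : Ψ' - A * R * B - B * R * A + ((A - A * R * A) + (B - B * R * B) + Ψ' * R * Ψ') = 0 := by
    calc Ψ' - A * R * B - B * R * A + ((A - A * R * A) + (B - B * R * B) + Ψ' * R * Ψ')
        = Ψ' + (A + B) + Ψ' * R * Ψ'
          - (A * R * B + B * R * A + A * R * A + B * R * B) := by abel
      _ = 0 := by rw [e2, hS]; abel
  rw [eq_comm, neg_eq_iff_add_eq_zero, add_comm]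
  exact goal'


lemma backward {n m p : ℕ}
    (Ψ : Matrix (Fin n) (Fin n) ℝ) (hΨ : Ψ.IsSymm)
    (G : Matrix (Fin n) (Fin m) ℝ) (H : Matrix (Fin n) (Fin p) ℝ)
    (σ : ℝ) (hσ : 0 ≤ σ)
    (hG : (σ • (G * Gᵀ) - Ψ).PosDef) (hH : (σ • (H * Hᵀ) - Ψ).PosDef) :
    ∃ Λ : Matrix (Fin m) (Fin p) ℝ, (-(Ψ + G * Λ * Hᵀ + H * Λᵀ * Gᵀ)).PosDef := by
  set A := σ • (G * Gᵀ) with hAdef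
  set B := σ • (H * Hᵀ) with hBdef
  have hApsd : A.PosSemidef := by
    have := Matrix.posSemidef_self_mul_conjTranspose G
    rw [conjTranspose_eq_transpose_of_trivial] at this
    exact psd_smul this hσ
  have hBpsd : B.PosSemidef := by
    have := Matrix.posSemidef_self_mul_conjTranspose H
    rw [conjTranspose_eq_transpose_of_trivial] at this
    exact psd_smul this hσ
  obtain ⟨ε₁, hε₁, hG1⟩ := posdef_shrink hG
  obtain ⟨ε₂, hε₂, hH1⟩ := posdef_shrink hH
  set ε := min ε₁ ε₂ with hεdef
  have hε : 0 < ε := lt_min hε₁ hε₂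
  have hmono : ∀ (P : Matrix (Fin n) (Fin n) ℝ) (e : ℝ), e ≥ ε →
      (P - e • 1).PosDef → (P - ε • 1).PosDef := by
    intro P e he hPe
    have : P - ε • 1 = (P - e • 1) + (e - ε) • (1 : Matrix (Fin n) (Fin n) ℝ) := by
      rw [sub_smul]; abel
    rw [this]
    exact hPe.add_posSemidef (psd_smul Matrix.PosSemidef.one (by linarith))
  have hG2 : (A - Ψ - ε • 1).PosDef := hmono _ ε₁ (min_le_left _ _) hG1
  have hH2 : (B - Ψ - ε • 1).PosDef := hmono _ ε₂ (min_le_right _ _) hH1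
  set Ψ' := Ψ + ε • (1 : Matrix (Fin n) (Fin n) ℝ) with hΨ'def
  have hG3 : (A - Ψ').PosDef := by
    have : A - Ψ' = A - Ψ - ε • 1 := by rw [hΨ'def]; abel
    rw [this]; exact hG2
  have hH3 : (B - Ψ').PosDef := by
    have : B - Ψ' = B - Ψ - ε • 1 := by rw [hΨ'def]; abel
    rw [this]; exact hH2
  set Q := A + B - Ψ' with hQdef
  have hQpd : Q.PosDef := by
    have : Q = (A - Ψ') + B := by rw [hQdef]; abel
    rw [this]; exact hG3.add_posSemidef hBpsd
  have hdet : IsUnit Q.det := isUnit_iff_ne_zero.mpr hQpd.det_pos.ne'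
  have h1 : Q * Q⁻¹ = 1 := Matrix.mul_nonsing_inv Q hdet
  have h2 : Q⁻¹ * Q = 1 := Matrix.nonsing_inv_mul Q hdet
  have hQsym : Qᵀ = Q := by
    have := hQpd.isHermitian
    rwa [Matrix.IsHermitian, conjTranspose_eq_transpose_of_trivial] at this
  have hRsym : (Q⁻¹)ᵀ = Q⁻¹ := by rw [Matrix.transpose_nonsing_inv, hQsym]
  refine ⟨(-(σ*σ)) • (Gᵀ * Q⁻¹ * H), ?_⟩
  have hGL : G * ((-(σ*σ)) • (Gᵀ * Q⁻¹ * H)) * Hᵀ = -(A * Q⁻¹ * B) := by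
    rw [hAdef, hBdef]
    simp only [Matrix.mul_smul, Matrix.smul_mul, smul_smul, Matrix.mul_assoc, neg_smul, neg_mul, mul_neg, Matrix.neg_mul, Matrix.mul_neg, Matrix.mul_smul, Matrix.smul_mul]
  have hLT : ((-(σ*σ)) • (Gᵀ * Q⁻¹ * H))ᵀ = (-(σ*σ)) • (Hᵀ * Q⁻¹ * G) := by
    rw [Matrix.transpose_smul, Matrix.transpose_mul, Matrix.transpose_mul, Matrix.transpose_transpose,
      hRsym, Matrix.mul_assoc]
  have hHL : H * ((-(σ*σ)) • (Gᵀ * Q⁻¹ * H))ᵀ * Gᵀ = -(B * Q⁻¹ * A) := by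
    rw [hLT, hAdef, hBdef]
    simp only [Matrix.mul_smul, Matrix.smul_mul, smul_smul, Matrix.mul_assoc, neg_smul, neg_mul, mul_neg, Matrix.neg_mul, Matrix.mul_neg, Matrix.mul_smul, Matrix.smul_mul]
  have hkey := key_identity A B Ψ' Q Q⁻¹ hQdef h1 h2
  have hexp : Ψ + G * ((-(σ*σ)) • (Gᵀ * Q⁻¹ * H)) * Hᵀ + H * ((-(σ*σ)) • (Gᵀ * Q⁻¹ * H))ᵀ * Gᵀ
      = -(ε • 1) + (Ψ' - A * Q⁻¹ * B - B * Q⁻¹ * A) := by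
    rw [hGL, hHL, hΨ'def]; abel
  rw [hexp, hkey]
  have : -(-(ε • (1 : Matrix (Fin n) (Fin n) ℝ)) +
      -((A - A * Q⁻¹ * A) + (B - B * Q⁻¹ * B) + Ψ' * Q⁻¹ * Ψ'))
      = ε • 1 + ((A - A * Q⁻¹ * A) + (B - B * Q⁻¹ * B) + Ψ' * Q⁻¹ * Ψ') := by abel
  rw [this]
  have hΨ'sym : Ψ'ᴴ = Ψ' := by
    rw [hΨ'def, conjTranspose_add, conjTranspose_smul, conjTranspose_one,
      conjTranspose_eq_transpose_of_trivial, hΨ.eq]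
    simp
  have hpsd1 : (A - A * Q⁻¹ * A).PosSemidef :=
    sub_mul_inv_mul_psd hApsd hQpd (by
      have : Q - A = B - Ψ' := by rw [hQdef]; abel
      rw [this]; exact hH3.posSemidef)
  have hpsd2 : (B - B * Q⁻¹ * B).PosSemidef :=
    sub_mul_inv_mul_psd hBpsd hQpd (by
      have : Q - B = A - Ψ' := by rw [hQdef]; abel
      rw [this]; exact hG3.posSemidef)
  have hpsd3 : (Ψ' * Q⁻¹ * Ψ').PosSemidef := by
    have := hQpd.inv.posSemidef.mul_mul_conjTranspose_same Ψ'
    rwa [hΨ'sym] at this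
  exact (smul_one_posdef hε).add_posSemidef ((hpsd1.add hpsd2).add hpsd3)


lemma scalar_ineq (c δ X U Z C P : ℝ) (hc : 0 < c) (hδ : 0 < δ) (hX : 0 < X)
    (hU : 0 ≤ U) (hZ : 0 ≤ Z) (hzX : Z ≤ c * X)
    (h0 : 0 ≤ (δ/(2*c)) * ((δ/(2*c)) * Z) + (2 * ((δ/(2*c)) * C) + U))
    (hq : P + 2 * C ≤ -(δ * X)) : P < (2*c/δ) * U := by
  set t := δ/(2*c) with ht
  have htpos : 0 < t := by positivity
  have key : 0 ≤ t * Z + 2 * C + (1/t) * U := by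
    have hE : t * (t * Z + 2 * C + (1/t) * U) = t * (t * Z) + (2 * (t * C) + U) := by
      field_simp; ring
    rcases le_or_gt 0 (t * Z + 2 * C + (1/t) * U) with h | h
    · exact h
    · exfalso
      have hneg : t * (t * Z + 2 * C + (1/t) * U) < 0 := mul_neg_of_pos_of_neg htpos h
      rw [hE] at hneg
      linarith
  have h2 : t * Z ≤ δ/2 * X := by
    rw [ht]; rw [div_mul_eq_mul_div, div_le_iff₀ (by positivity : (0:ℝ) < 2*c)] at *
    nlinarith
  have h3 : (1/t) = 2*c/δ := by rw [ht]; field_simp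
  nlinarith [hq, key, h2]

lemma exists_sigma {N k : ℕ} (Ψ : Matrix (Fin N) (Fin N) ℝ) (hΨ : Ψ.IsSymm)
    (E : Matrix (Fin N) (Fin k) ℝ) (Z : Matrix (Fin k) (Fin N) ℝ) (δ : ℝ) (hδ : 0 < δ)
    (hineq : ∀ x : Fin N → ℝ,
      x ⬝ᵥ Ψ.mulVec x + 2 * ((Eᵀ.mulVec x) ⬝ᵥ (Z.mulVec x)) ≤ -(δ * (x ⬝ᵥ x))) :
    ∃ σ : ℝ, 0 ≤ σ ∧ (-(Ψ - σ • (E * Eᵀ))).PosDef := by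
  obtain ⟨c, hc, hcb⟩ := mulVec_sq_bound Z
  refine ⟨2*c/δ, by positivity, ?_⟩
  rw [real_posdef_iff]
  constructor
  · rw [Matrix.IsHermitian, conjTranspose_eq_transpose_of_trivial]
    simp [Matrix.transpose_neg, Matrix.transpose_sub, Matrix.transpose_smul,
      Matrix.transpose_mul, Matrix.transpose_transpose, hΨ.eq]
  · intro x hx
    have hxx : 0 < x ⬝ᵥ x := by
      rcases (dp_self_nonneg x).lt_or_eq with h | h
      · exact h
      · exact absurd (dotProduct_self_eq_zero.mp h.symm) hx
    set u := Eᵀ.mulVec x with hu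
    set z := Z.mulVec x with hz
    have hquad : x ⬝ᵥ (-(Ψ - (2*c/δ) • (E * Eᵀ))).mulVec x
        = (2*c/δ) * (u ⬝ᵥ u) - x ⬝ᵥ Ψ.mulVec x := by
      rw [Matrix.neg_mulVec, dotProduct_neg, Matrix.sub_mulVec, dotProduct_sub,
        smul_mulVec, dotProduct_smul, smul_eq_mul]
      have : x ⬝ᵥ (E * Eᵀ).mulVec x = u ⬝ᵥ u := by
        rw [← Matrix.mulVec_mulVec, dp_transpose, hu]
      rw [this]; ring
    rw [hquad]
    have h0 := dp_self_nonneg ((δ/(2*c)) • z + u)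
    have hexp : ((δ/(2*c)) • z + u) ⬝ᵥ ((δ/(2*c)) • z + u)
        = (δ/(2*c)) * ((δ/(2*c)) * (z ⬝ᵥ z)) + (2 * ((δ/(2*c)) * (u ⬝ᵥ z)) + u ⬝ᵥ u) := by
      rw [dotProduct_add, add_dotProduct, add_dotProduct, smul_dotProduct, smul_dotProduct,
        dotProduct_smul, dotProduct_smul, dotProduct_comm z u]
      simp [smul_eq_mul]; ring
    rw [hexp] at h0
    have := scalar_ineq c δ (x ⬝ᵥ x) (u ⬝ᵥ u) (z ⬝ᵥ z) (u ⬝ᵥ z) (x ⬝ᵥ Ψ.mulVec x)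
      hc hδ hxx (dp_self_nonneg u) (dp_self_nonneg z) (hcb x) h0 (hineq x)
    linarith

/-- Finsler's lemma: there exists `Λ` with `Ψ + GΛHᵀ + HΛᵀGᵀ < 0` iff there exists
`σ ∈ ℝ` with `Ψ − σGGᵀ < 0` and `Ψ − σHHᵀ < 0`. -/
theorem finslers_lemma (n m p : ℕ)
    (Ψ : Matrix (Fin n) (Fin n) ℝ) (hΨ : Ψ.IsSymm)
    (G : Matrix (Fin n) (Fin m) ℝ) (H : Matrix (Fin n) (Fin p) ℝ) :
    (∃ Λ : Matrix (Fin m) (Fin p) ℝ, (-(Ψ + G * Λ * Hᵀ + H * Λᵀ * Gᵀ)).PosDef) ↔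
      (∃ σ : ℝ, (-(Ψ - σ • (G * Gᵀ))).PosDef ∧ (-(Ψ - σ • (H * Hᵀ))).PosDef) := by
  have hGGpsd : (G * Gᵀ).PosSemidef := by
    have := Matrix.posSemidef_self_mul_conjTranspose G
    rwa [conjTranspose_eq_transpose_of_trivial] at this
  have hHHpsd : (H * Hᵀ).PosSemidef := by
    have := Matrix.posSemidef_self_mul_conjTranspose H
    rwa [conjTranspose_eq_transpose_of_trivial] at this
  constructor
  · rintro ⟨Λ, hΛ⟩
    obtain ⟨δ, hδ, hb⟩ := posdef_lower hΛ
    have e1 : ∀ x : Fin n → ℝ, x ⬝ᵥ ((G * Λ * Hᵀ).mulVec x)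
        = (Gᵀ.mulVec x) ⬝ᵥ ((Λ * Hᵀ).mulVec x) := fun x => by
      rw [Matrix.mul_assoc, ← Matrix.mulVec_mulVec, dp_transpose]
    have e3 : ∀ x : Fin n → ℝ, x ⬝ᵥ ((H * Λᵀ * Gᵀ).mulVec x)
        = (Hᵀ.mulVec x) ⬝ᵥ ((Λᵀ * Gᵀ).mulVec x) := fun x => by
      rw [Matrix.mul_assoc, ← Matrix.mulVec_mulVec, dp_transpose]
    have e2 : ∀ x : Fin n → ℝ, x ⬝ᵥ ((H * Λᵀ * Gᵀ).mulVec x)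
        = x ⬝ᵥ ((G * Λ * Hᵀ).mulVec x) := fun x => by
      have ht : (H * Λᵀ * Gᵀ)ᵀ = G * Λ * Hᵀ := by
        rw [Matrix.transpose_mul, Matrix.transpose_mul, Matrix.transpose_transpose,
          Matrix.transpose_transpose, Matrix.mul_assoc]
      rw [dp_transpose, ht, dotProduct_comm]
    have hbase : ∀ x : Fin n → ℝ, x ⬝ᵥ Ψ.mulVec x + 2 * (x ⬝ᵥ ((G * Λ * Hᵀ).mulVec x))
        ≤ -(δ * (x ⬝ᵥ x)) := by
      intro x
      have h := hb x
      rw [Matrix.neg_mulVec, dotProduct_neg, Matrix.add_mulVec, Matrix.add_mulVec,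
        dotProduct_add, dotProduct_add, e2 x] at h
      linarith
    have hineqG : ∀ x : Fin n → ℝ,
        x ⬝ᵥ Ψ.mulVec x + 2 * ((Gᵀ.mulVec x) ⬝ᵥ ((Λ * Hᵀ).mulVec x)) ≤ -(δ * (x ⬝ᵥ x)) := by
      intro x; have := hbase x; rwa [e1 x] at this
    have hineqH : ∀ x : Fin n → ℝ,
        x ⬝ᵥ Ψ.mulVec x + 2 * ((Hᵀ.mulVec x) ⬝ᵥ ((Λᵀ * Gᵀ).mulVec x)) ≤ -(δ * (x ⬝ᵥ x)) := by
      intro x; have := hbase x; rwa [← e2 x, e3 x] at this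
    obtain ⟨σ₁, hσ₁, hP1⟩ := exists_sigma Ψ hΨ G (Λ * Hᵀ) δ hδ hineqG
    obtain ⟨σ₂, hσ₂, hP2⟩ := exists_sigma Ψ hΨ H (Λᵀ * Gᵀ) δ hδ hineqH
    refine ⟨max σ₁ σ₂, ?_, ?_⟩
    · have hsplit : -(Ψ - (max σ₁ σ₂) • (G * Gᵀ))
          = -(Ψ - σ₁ • (G * Gᵀ)) + (max σ₁ σ₂ - σ₁) • (G * Gᵀ) := by
        rw [sub_smul]; abel
      rw [hsplit]
      exact hP1.add_posSemidef (psd_smul hGGpsd (by simp [le_max_left]))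
    · have hsplit : -(Ψ - (max σ₁ σ₂) • (H * Hᵀ))
          = -(Ψ - σ₂ • (H * Hᵀ)) + (max σ₁ σ₂ - σ₂) • (H * Hᵀ) := by
        rw [sub_smul]; abel
      rw [hsplit]
      exact hP2.add_posSemidef (psd_smul hHHpsd (by simp [le_max_right]))
  · rintro ⟨σ, hG, hH⟩
    have hσ' : (0:ℝ) ≤ max σ 0 := le_max_right _ _
    have hG' : ((max σ 0) • (G * Gᵀ) - Ψ).PosDef := by
      have hsplit : (max σ 0) • (G * Gᵀ) - Ψ
          = -(Ψ - σ • (G * Gᵀ)) + (max σ 0 - σ) • (G * Gᵀ) := by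
        rw [sub_smul]; abel
      rw [hsplit]
      exact hG.add_posSemidef (psd_smul hGGpsd (by simp [le_max_left]))
    have hH' : ((max σ 0) • (H * Hᵀ) - Ψ).PosDef := by
      have hsplit : (max σ 0) • (H * Hᵀ) - Ψ
          = -(Ψ - σ • (H * Hᵀ)) + (max σ 0 - σ) • (H * Hᵀ) := by
        rw [sub_smul]; abel
      rw [hsplit]
      exact hH.add_posSemidef (psd_smul hHHpsd (by simp [le_max_left]))
    exact backward Ψ hΨ G H (max σ 0) hσ' hG' hH'
end

section
/- (Alternative form of Finsler's lemma) Let Ψ ∈ S^n and Z ∈ ℝ^{p×n}. If xᵀΨx < 0 holds for every nonzero x ∈ ℝ^n satisfying Zx = 0, then there exists σ > 0 such that Ψ − σZᵀZ is negative definite. -/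
open Matrix

private lemma quad_cont {n : ℕ} (M : Matrix (Fin n) (Fin n) ℝ) :
    Continuous fun x : Fin n → ℝ => x ⬝ᵥ M.mulVec x := by
  simp only [mulVec, dotProduct]
  fun_prop

private lemma quad_smul {n : ℕ} (M : Matrix (Fin n) (Fin n) ℝ) (c : ℝ) (x : Fin n → ℝ) :
    (c • x) ⬝ᵥ M.mulVec (c • x) = c ^ 2 * (x ⬝ᵥ M.mulVec x) := by
  rw [mulVec_smul, dotProduct_smul, smul_dotProduct, smul_eq_mul, smul_eq_mul]
  ring

private lemma gram_quad {n p : ℕ} (Z : Matrix (Fin p) (Fin n) ℝ) (x : Fin n → ℝ) :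
    x ⬝ᵥ (Zᵀ * Z).mulVec x = Z.mulVec x ⬝ᵥ Z.mulVec x := by
  rw [← mulVec_mulVec, dotProduct_mulVec, vecMul_transpose]

private lemma self_dot_nonneg {m : ℕ} (v : Fin m → ℝ) : 0 ≤ v ⬝ᵥ v :=
  Finset.sum_nonneg fun i _ => mul_self_nonneg (v i)

/-- Alternative form of Finsler's lemma: if `xᵀΨx < 0` for every nonzero `x` with `Zx = 0`,
then there exists `σ > 0` such that `Ψ − σZᵀZ` is negative definite. -/
theorem finslers_lemma_alt (n p : ℕ)
    (Ψ : Matrix (Fin n) (Fin n) ℝ) (hΨ : Ψ.IsSymm)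
    (Z : Matrix (Fin p) (Fin n) ℝ)
    (h : ∀ x : Fin n → ℝ, x ≠ 0 → Z.mulVec x = 0 → x ⬝ᵥ Ψ.mulVec x < 0) :
    ∃ σ : ℝ, 0 < σ ∧ (-(Ψ - σ • (Zᵀ * Z))).PosDef := by
  set f : (Fin n → ℝ) → ℝ := fun x => x ⬝ᵥ Ψ.mulVec x with hf
  set g : (Fin n → ℝ) → ℝ := fun x => x ⬝ᵥ (Zᵀ * Z).mulVec x with hg
  have hfc : Continuous f := quad_cont Ψ
  have hgc : Continuous g := quad_cont (Zᵀ * Z)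
  have hgnn : ∀ x, 0 ≤ g x := fun x => by
    rw [hg]; simp only [gram_quad]; exact self_dot_nonneg _
  -- the main claim on the unit sphere
  have key : ∃ σ : ℝ, 0 < σ ∧ ∀ x : Fin n → ℝ, ‖x‖ = 1 → f x - σ * g x < 0 := by
    set S : Set (Fin n → ℝ) := Metric.sphere 0 1 with hS
    have hScompact : IsCompact S := isCompact_sphere 0 1
    have hSnorm : ∀ x ∈ S, ‖x‖ = 1 := by
      intro x hx; rwa [hS, Metric.mem_sphere, dist_zero_right] at hx
    set K : Set (Fin n → ℝ) := S ∩ {x | 0 ≤ f x} with hK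
    have hKcompact : IsCompact K :=
      hScompact.inter_right (isClosed_le continuous_const hfc)
    by_cases hKne : K.Nonempty
    · -- min of g on K is positive, max of f on S
      obtain ⟨x₀, hx₀K, hx₀min⟩ :=
        hKcompact.exists_isMinOn hKne hgc.continuousOn
      have hSne : S.Nonempty := ⟨x₀, hx₀K.1⟩
      obtain ⟨x₁, hx₁S, hx₁max⟩ :=
        hScompact.exists_isMaxOn hSne hfc.continuousOn
      have hm : 0 < g x₀ := by
        rcases lt_or_eq_of_le (hgnn x₀) with hlt | heq
        · exact hlt
        · exfalso
          have hx0ne : x₀ ≠ 0 := by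
            intro h0
            have := hSnorm x₀ hx₀K.1
            rw [h0] at this; simp at this
          have hZx0 : Z.mulVec x₀ = 0 := by
            have : Z.mulVec x₀ ⬝ᵥ Z.mulVec x₀ = 0 := by
              rw [hg] at heq; simp only [gram_quad] at heq; linarith
            exact dotProduct_self_eq_zero.mp this
          have := h x₀ hx0ne hZx0
          have h2 := hx₀K.2
          simp only [Set.mem_setOf_eq] at h2
          rw [hf] at h2; linarith
      have hM0 : 0 ≤ f x₁ := le_trans hx₀K.2 (hx₁max hx₀K.1)
      refine ⟨(f x₁ + 1) / g x₀, div_pos (by linarith) hm, ?_⟩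
      intro x hxnorm
      have hxS : x ∈ S := by rw [hS, Metric.mem_sphere, dist_zero_right]; exact hxnorm
      by_cases hfx : 0 ≤ f x
      · have hxK : x ∈ K := ⟨hxS, hfx⟩
        have h1 : g x₀ ≤ g x := hx₀min hxK
        have h2 : f x ≤ f x₁ := hx₁max hxS
        have h3 : (f x₁ + 1) / g x₀ * g x₀ ≤ (f x₁ + 1) / g x₀ * g x :=
          mul_le_mul_of_nonneg_left h1 (le_of_lt (div_pos (by linarith) hm))
        rw [div_mul_cancel₀ _ (ne_of_gt hm)] at h3
        linarith
      · push_neg at hfx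
        have : 0 ≤ (f x₁ + 1) / g x₀ * g x :=
          mul_nonneg (le_of_lt (div_pos (by linarith) hm)) (hgnn x)
        linarith
    · -- K empty: f < 0 on all of S, take σ = 1
      refine ⟨1, one_pos, ?_⟩
      intro x hxnorm
      have hxS : x ∈ S := by rw [hS, Metric.mem_sphere, dist_zero_right]; exact hxnorm
      have hfx : f x < 0 := by
        by_contra hcon
        push_neg at hcon
        exact hKne ⟨x, hxS, hcon⟩
      have := hgnn x
      linarith
  obtain ⟨σ, hσpos, hσ⟩ := key
  refine ⟨σ, hσpos, posDef_iff_dotProduct_mulVec.mpr ⟨?_, ?_⟩⟩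
  · -- Hermitian
    have hZZ : (Zᵀ * Z).IsSymm := by
      rw [Matrix.IsSymm, transpose_mul, transpose_transpose]
    rw [Matrix.IsHermitian]
    ext i j
    simp only [conjTranspose_neg, conjTranspose_sub, conjTranspose_smul, Matrix.neg_apply, Matrix.sub_apply,
      Matrix.smul_apply, smul_eq_mul]
    have h1 : Ψᴴ = Ψ := by
      rw [show Ψᴴ = Ψᵀ from rfl]; exact hΨ
    have h2 : (Zᵀ * Z)ᴴ = Zᵀ * Z := by
      rw [show (Zᵀ * Z)ᴴ = (Zᵀ * Z)ᵀ from rfl]; exact hZZ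
    rw [h1, h2]
    norm_num
  · intro x hx
    have hxnorm : 0 < ‖x‖ := norm_pos_iff.mpr hx
    set c : ℝ := ‖x‖⁻¹ with hc
    have hcpos : 0 < c := by positivity
    have hynorm : ‖c • x‖ = 1 := by
      rw [norm_smul, hc, norm_inv, norm_norm, inv_mul_cancel₀ (ne_of_gt hxnorm)]
    have hkey := hσ (c • x) hynorm
    rw [hf, hg] at hkey
    simp only [quad_smul] at hkey
    have hc2 : 0 < c ^ 2 := by positivity
    have hquad : f x - σ * g x < 0 := by
      rw [hf, hg]
      nlinarith [hkey]
    have expand : star x ⬝ᵥ (-(Ψ - σ • (Zᵀ * Z))).mulVec x = -(f x - σ * g x) := by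
      rw [show star x = x from rfl, neg_mulVec, dotProduct_neg, sub_mulVec,
        dotProduct_sub, smul_mulVec, dotProduct_smul, smul_eq_mul, hf, hg]
    rw [expand]
    linarith
end

section
/- (S-variable characterization of the continuous-time Lyapunov inequality) Let A ∈ ℝ^{n×n}. There exists a symmetric positive definite P ∈ S^n such that AᵀP + PA is negative definite if and only if there exist a symmetric positive definite P ∈ S^n and matrices F₁, F₂ ∈ ℝ^{n×n} such that the symmetric block matrix [[F₁A + AᵀF₁ᵀ, P − F₁ + AᵀF₂ᵀ], [(P − F₁ + AᵀF₂ᵀ)ᵀ, −(F₂ + F₂ᵀ)]] is negative definite. -/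
open Matrix

private lemma quadform_cont {n : ℕ} (M : Matrix (Fin n) (Fin n) ℝ) :
    Continuous fun x : Fin n → ℝ => x ⬝ᵥ M *ᵥ x := by
  simp only [dotProduct, Matrix.mulVec]
  refine continuous_finset_sum _ fun i _ => (continuous_apply i).mul ?_
  exact continuous_finset_sum _ fun j _ => continuous_const.mul (continuous_apply j)

private lemma dp_t {m k : Type*} [Fintype m] [Fintype k] (M : Matrix m k ℝ)
    (u : m → ℝ) (v : k → ℝ) : u ⬝ᵥ (M *ᵥ v) = v ⬝ᵥ (Mᵀ *ᵥ u) := by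
  rw [dotProduct_mulVec, dotProduct_comm, mulVec_transpose]

private lemma dp_self_nonneg_s18 {m : Type*} [Fintype m] (v : m → ℝ) : 0 ≤ v ⬝ᵥ v :=
  Finset.sum_nonneg fun i _ => mul_self_nonneg _

private lemma shrink {n : ℕ} {Q S : Matrix (Fin n) (Fin n) ℝ}
    (hQ : Q.PosDef) (hS : S.IsHermitian) :
    ∃ t : ℝ, 0 < t ∧ (Q - t • S).PosDef := by
  have herm : ∀ t : ℝ, (Q - t • S).IsHermitian := fun t => by
    have : (t • S).IsHermitian := by
      unfold Matrix.IsHermitian at hS ⊢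
      rw [Matrix.conjTranspose_smul, hS]; simp
    exact hQ.1.sub this
  rcases Nat.eq_zero_or_pos n with hn | hn
  · subst hn
    exact ⟨1, one_pos, herm 1, fun x hx => absurd (Subsingleton.elim x 0) hx⟩
  haveI : Nonempty (Fin n) := ⟨⟨0, hn⟩⟩
  obtain ⟨u0, hu0⟩ : (Metric.sphere (0 : Fin n → ℝ) 1).Nonempty :=
    NormedSpace.sphere_nonempty.mpr zero_le_one
  have hK : IsCompact (Metric.sphere (0 : Fin n → ℝ) 1) := isCompact_sphere 0 1
  obtain ⟨um, humK, hum'⟩ :=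
    hK.exists_isMinOn ⟨u0, hu0⟩ (quadform_cont Q).continuousOn
  obtain ⟨uM, huMK, huM'⟩ :=
    hK.exists_isMaxOn ⟨u0, hu0⟩ (quadform_cont S).continuousOn
  have hum : ∀ u ∈ Metric.sphere (0 : Fin n → ℝ) 1, um ⬝ᵥ Q *ᵥ um ≤ u ⬝ᵥ Q *ᵥ u :=
    fun u hu => hum' hu
  have huM : ∀ u ∈ Metric.sphere (0 : Fin n → ℝ) 1, u ⬝ᵥ S *ᵥ u ≤ uM ⬝ᵥ S *ᵥ uM :=
    fun u hu => huM' hu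
  set m := um ⬝ᵥ Q *ᵥ um with hm_def
  set C := max (uM ⬝ᵥ S *ᵥ uM) 0 with hC_def
  have hC0 : 0 ≤ C := le_max_right _ _
  have hum1 : ‖um‖ = 1 := mem_sphere_zero_iff_norm.mp humK
  have hm : 0 < m := by
    refine hQ.dotProduct_mulVec_pos (x := um) fun h => ?_
    rw [h, norm_zero] at hum1; norm_num at hum1
  refine ⟨m / (C + 1), div_pos hm (by linarith),
    Matrix.PosDef.of_dotProduct_mulVec_pos (herm _) fun x hx => ?_⟩
  set t := m / (C + 1) with ht_def
  have ht : 0 < t := div_pos hm (by linarith)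
  have hr : 0 < ‖x‖ := norm_pos_iff.mpr hx
  set u : Fin n → ℝ := ‖x‖⁻¹ • x with hu_def
  have huS : u ∈ Metric.sphere (0 : Fin n → ℝ) 1 := by
    rw [mem_sphere_zero_iff_norm, hu_def, norm_smul, norm_inv, norm_norm,
      inv_mul_cancel₀ hr.ne']
  have hxu : x = ‖x‖ • u := by
    rw [hu_def, smul_smul, mul_inv_cancel₀ hr.ne', one_smul]
  have hQu : m ≤ u ⬝ᵥ Q *ᵥ u := hum u huS
  have hSu : u ⬝ᵥ S *ᵥ u ≤ C := le_max_of_le_left (huM u huS)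
  have key : x ⬝ᵥ (Q - t • S) *ᵥ x
      = ‖x‖ ^ 2 * (u ⬝ᵥ Q *ᵥ u - t * (u ⬝ᵥ S *ᵥ u)) := by
    conv_lhs => rw [hxu]
    simp only [sub_mulVec, Matrix.mulVec_smul, smul_mulVec, smul_dotProduct,
      dotProduct_smul, smul_eq_mul, dotProduct_sub, Pi.smul_apply]
    ring
  have htC : t * C < m := by
    rw [ht_def, div_mul_eq_mul_div, div_lt_iff₀ (by linarith)]
    nlinarith
  have : 0 < u ⬝ᵥ Q *ᵥ u - t * (u ⬝ᵥ S *ᵥ u) := by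
    nlinarith [mul_le_mul_of_nonneg_left hSu ht.le]
  simp only [star_trivial]
  rw [key]
  positivity

/-- expansion of the quadratic form of a block matrix -/
private lemma quad_blocks {n : ℕ} (B₁₁ B₁₂ B₂₁ B₂₂ : Matrix (Fin n) (Fin n) ℝ)
    (x y : Fin n → ℝ) :
    Sum.elim x y ⬝ᵥ (fromBlocks B₁₁ B₁₂ B₂₁ B₂₂ *ᵥ Sum.elim x y)
      = x ⬝ᵥ (B₁₁ *ᵥ x) + x ⬝ᵥ (B₁₂ *ᵥ y) + y ⬝ᵥ (B₂₁ *ᵥ x) + y ⬝ᵥ (B₂₂ *ᵥ y) := by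
  simp only [Matrix.fromBlocks_mulVec, sumElim_dotProduct_sumElim,
    Sum.elim_comp_inl, Sum.elim_comp_inr, dotProduct_add]
  ring

/-- quadratic form of a block matrix along the graph of `A` -/
private lemma quad_graph {n : ℕ} (A B₁₁ B₁₂ B₂₁ B₂₂ : Matrix (Fin n) (Fin n) ℝ)
    (x : Fin n → ℝ) :
    Sum.elim x (A *ᵥ x) ⬝ᵥ (fromBlocks B₁₁ B₁₂ B₂₁ B₂₂ *ᵥ Sum.elim x (A *ᵥ x))
      = x ⬝ᵥ ((B₁₁ + B₁₂ * A + Aᵀ * (B₂₁ + B₂₂ * A)) *ᵥ x) := by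
  have hz : Sum.elim x (A *ᵥ x) = fromRows 1 A *ᵥ x := by
    rw [fromRows_mulVec, one_mulVec]
  rw [hz, dotProduct_comm, dp_t, mulVec_mulVec, mulVec_mulVec, transpose_fromRows,
    transpose_one, Matrix.mul_assoc, fromBlocks_mul_fromRows, fromCols_mul_fromRows]
  simp only [Matrix.mul_one, Matrix.one_mul]

/-- S-variable characterization of the continuous-time Lyapunov inequality:
there exists `P > 0` with `AᵀP + PA < 0` iff there exist `P > 0` and `F₁, F₂` such that
`[[F₁A + AᵀF₁ᵀ, P − F₁ + AᵀF₂ᵀ], [(P − F₁ + AᵀF₂ᵀ)ᵀ, −(F₂ + F₂ᵀ)]] < 0`. -/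
theorem s_variable_lyapunov (n : ℕ) (A : Matrix (Fin n) (Fin n) ℝ) :
    (∃ P : Matrix (Fin n) (Fin n) ℝ, P.PosDef ∧ (-(Aᵀ * P + P * A)).PosDef) ↔
      (∃ (P F₁ F₂ : Matrix (Fin n) (Fin n) ℝ), P.PosDef ∧
        (-(Matrix.fromBlocks (F₁ * A + Aᵀ * F₁ᵀ) (P - F₁ + Aᵀ * F₂ᵀ)
            (P - F₁ + Aᵀ * F₂ᵀ)ᵀ (-(F₂ + F₂ᵀ)))).PosDef) := by
  constructor
  · rintro ⟨P, hP, hQ⟩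
    have hPt : Pᵀ = P := by
      exact (by simpa [Matrix.conjTranspose_eq_transpose_of_trivial] using hP.1 : P.IsSymm)
    obtain ⟨t, ht, hts⟩ := shrink (S := Aᵀ * A) hQ (by
      simpa [Matrix.conjTranspose_eq_transpose_of_trivial] using
        Matrix.isHermitian_conjTranspose_mul_self A)
    refine ⟨P, P, (2 * t) • 1, hP, ?_⟩
    -- simplify the blocks
    have hB12 : P - P + Aᵀ * ((2 * t) • (1 : Matrix (Fin n) (Fin n) ℝ))ᵀ
        = (2 * t) • Aᵀ := by
      simp [Matrix.mul_smul]
    have hB22 : -((2 * t) • (1 : Matrix (Fin n) (Fin n) ℝ)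
          + ((2 * t) • (1 : Matrix (Fin n) (Fin n) ℝ))ᵀ)
        = (-(4 * t)) • 1 := by
      rw [Matrix.transpose_smul, Matrix.transpose_one, ← add_smul, ← neg_smul]
      congr 1
      ring
    rw [hB12, hB22]
    refine Matrix.PosDef.of_dotProduct_mulVec_pos ?_ ?_
    · -- Hermitian
      rw [Matrix.IsHermitian, Matrix.conjTranspose_eq_transpose_of_trivial,
        Matrix.transpose_neg, Matrix.fromBlocks_transpose]
      simp only [Matrix.transpose_transpose, Matrix.transpose_add, Matrix.transpose_mul,
        Matrix.transpose_smul, Matrix.transpose_one, hPt]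
      congr 1
      exact Matrix.fromBlocks_inj.mpr ⟨add_comm _ _, rfl, rfl, rfl⟩
    · intro z hz
      set x : Fin n → ℝ := z ∘ Sum.inl with hx_def
      set y : Fin n → ℝ := z ∘ Sum.inr with hy_def
      set a : Fin n → ℝ := A *ᵥ x with ha_def
      have hzelim : z = Sum.elim x y := by funext i; cases i <;> rfl
      -- the quadratic form
      have hform : star z ⬝ᵥ ((-(Matrix.fromBlocks (P * A + Aᵀ * Pᵀ)
            ((2 * t) • Aᵀ) ((2 * t) • Aᵀ)ᵀ ((-(4 * t)) • 1))) *ᵥ z)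
          = -(2 * (x ⬝ᵥ (P *ᵥ a)) + (4 * t) * (y ⬝ᵥ a) - (4 * t) * (y ⬝ᵥ y)) := by
        rw [hzelim, star_trivial, Matrix.neg_mulVec, dotProduct_neg, quad_blocks]
        have e11 : x ⬝ᵥ ((P * A + Aᵀ * Pᵀ) *ᵥ x) = 2 * (x ⬝ᵥ (P *ᵥ a)) := by
          rw [Matrix.add_mulVec, dotProduct_add, hPt,
            ← Matrix.mulVec_mulVec, ← Matrix.mulVec_mulVec, ha_def,
            dp_t Aᵀ x (P *ᵥ x), Matrix.transpose_transpose,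
            dotProduct_comm (P *ᵥ x) (A *ᵥ x), dp_t P (A *ᵥ x) x, hPt]
          ring
        have e12 : x ⬝ᵥ (((2 * t) • Aᵀ) *ᵥ y) = (2 * t) * (y ⬝ᵥ a) := by
          rw [Matrix.smul_mulVec, dotProduct_smul, smul_eq_mul,
            dp_t Aᵀ x y, Matrix.transpose_transpose, ← ha_def]
        have e21 : y ⬝ᵥ ((((2 * t) • Aᵀ)ᵀ) *ᵥ x) = (2 * t) * (y ⬝ᵥ a) := by
          rw [Matrix.transpose_smul, Matrix.transpose_transpose,
            Matrix.smul_mulVec, dotProduct_smul, smul_eq_mul, ← ha_def]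
        have e22 : y ⬝ᵥ (((-(4 * t)) • (1 : Matrix (Fin n) (Fin n) ℝ)) *ᵥ y)
            = -(4 * t) * (y ⬝ᵥ y) := by
          rw [Matrix.smul_mulVec, dotProduct_smul, smul_eq_mul,
            Matrix.one_mulVec]
        rw [e11, e12, e21, e22]
        ring
      rw [hform]
      -- the completed square
      set w : Fin n → ℝ := y - (1/2 : ℝ) • a with hw_def
      have hsq : y ⬝ᵥ y - (y ⬝ᵥ a) + (1/4 : ℝ) * (a ⬝ᵥ a) = w ⬝ᵥ w := by
        rw [hw_def]
        simp only [dotProduct_sub, sub_dotProduct, dotProduct_smul,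
          smul_dotProduct, smul_eq_mul, dotProduct_comm a y]
        ring
      have hw : 0 ≤ w ⬝ᵥ w := dp_self_nonneg_s18 w
      by_cases hx : x = 0
      · have hy : y ≠ 0 := by
          intro h
          apply hz
          rw [hzelim, hx, h]
          funext i; cases i <;> rfl
        have ha0 : a = 0 := by rw [ha_def, hx, Matrix.mulVec_zero]
        have hyy : 0 < y ⬝ᵥ y :=
          lt_of_le_of_ne (dp_self_nonneg_s18 y) fun h => hy (dotProduct_self_eq_zero.mp h.symm)
        rw [ha0]
        simp only [Matrix.mulVec_zero, dotProduct_zero, zero_dotProduct,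
          mul_zero]
        nlinarith
      · have hkey := hts.dotProduct_mulVec_pos hx
        rw [star_trivial, Matrix.sub_mulVec, dotProduct_sub,
          Matrix.smul_mulVec, dotProduct_smul, smul_eq_mul,
          Matrix.neg_mulVec, dotProduct_neg] at hkey
        have eq1 : x ⬝ᵥ ((Aᵀ * P + P * A) *ᵥ x) = 2 * (x ⬝ᵥ (P *ᵥ a)) := by
          rw [Matrix.add_mulVec, dotProduct_add,
            ← Matrix.mulVec_mulVec, ← Matrix.mulVec_mulVec, ha_def,
            dp_t Aᵀ x (P *ᵥ x), Matrix.transpose_transpose,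
            dotProduct_comm (P *ᵥ x) (A *ᵥ x), dp_t P (A *ᵥ x) x, hPt]
          ring
        have eq2 : x ⬝ᵥ ((Aᵀ * A) *ᵥ x) = a ⬝ᵥ a := by
          rw [← Matrix.mulVec_mulVec, dp_t Aᵀ x (A *ᵥ x), Matrix.transpose_transpose,
            ← ha_def]
        rw [eq1, eq2] at hkey
        nlinarith
  · rintro ⟨P, F₁, F₂, hP, hM⟩
    have hPt : Pᵀ = P := by
      exact (by simpa [Matrix.conjTranspose_eq_transpose_of_trivial] using hP.1 : P.IsSymm)
    refine ⟨P, hP, Matrix.PosDef.of_dotProduct_mulVec_pos ?_ ?_⟩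
    · have : (Aᵀ * P + P * A).IsHermitian := by
        rw [Matrix.IsHermitian, Matrix.conjTranspose_eq_transpose_of_trivial,
          Matrix.transpose_add, Matrix.transpose_mul, Matrix.transpose_mul,
          Matrix.transpose_transpose, hPt]
        exact add_comm _ _
      exact this.neg
    · intro x hx
      have hz : Sum.elim x (A *ᵥ x) ≠ 0 := by
        intro h
        apply hx
        have := congrFun h
        funext i
        simpa using this (Sum.inl i)
      have key := hM.dotProduct_mulVec_pos hz
      rw [Matrix.fromBlocks_neg, star_trivial, quad_graph] at key
      have hmat : -(F₁ * A + Aᵀ * F₁ᵀ) + -(P - F₁ + Aᵀ * F₂ᵀ) * A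
            + Aᵀ * (-(P - F₁ + Aᵀ * F₂ᵀ)ᵀ + - -(F₂ + F₂ᵀ) * A)
          = -(Aᵀ * P + P * A) := by
        simp only [Matrix.transpose_add, Matrix.transpose_sub, Matrix.transpose_mul,
          Matrix.transpose_transpose, hPt, neg_neg]
        noncomm_ring
      rw [hmat] at key
      simpa using key
end
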